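/- arXiv:2005.10042 — 6 statements merged into one kernel-verified Lean document; each statement's English description precedes it below -/
import Mathlib

section
/- For a solution of the truncated silicosis system, for any real weights (g_i) and any integer 1 ≤ m < n, the moment identity Σ_{i=m}^{n} g_i dM_i^n/dt + Σ_{i=m}^{n} g_i(p_i+q_i)M_i^n = g_m x^n k_{m−1} M_{m−1}^n + Σ_{i=m}^{n−1}(g_{i+1}−g_i) x^n k_i M_i^n holds for all t ≥ 0. -/
open MeasureTheory Set Filter

noncomputable section

/-- The truncated silicosis system (system (3.1)) of dimension `n+2`, stated as a
pointwise property at time `t`. -/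
def TruncSol (n : ℕ) (k p q : ℕ → ℝ) (r α : ℝ) (x : ℝ → ℝ) (M : ℕ → ℝ → ℝ) (t : ℝ) : Prop :=
  HasDerivAt (M 0) (r - k 0 * x t * M 0 t - (p 0 + q 0) * M 0 t) t ∧
  (∀ i : ℕ, 1 ≤ i → i ≤ n - 1 →
    HasDerivAt (M i)
      (k (i-1) * x t * M (i-1) t - k i * x t * M i t - (p i + q i) * M i t) t) ∧
  HasDerivAt (M n) (k (n-1) * x t * M (n-1) t - (p n + q n) * M n t) t ∧
  HasDerivAt x
    (α - x t * ∑ i ∈ Finset.range n, k i * M i t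
       + ∑ i ∈ Finset.range (n+1), (i : ℝ) * q i * M i t) t

/-- Shift lemma for sums over `Icc`. -/
lemma icc_shift (f : ℕ → ℝ) {m n : ℕ} (hmn : m ≤ n) :
    ∑ i ∈ Finset.Icc m n, f i = f m + ∑ i ∈ Finset.Ico m n, f (i + 1) := by
  rw [← Finset.Ico_add_one_right_eq_Icc, Finset.sum_Ico_eq_sum_range, Finset.sum_Ico_eq_sum_range]
  have h : n + 1 - m = (n - m) + 1 := by omega
  rw [h, Finset.sum_range_succ']
  rw [add_comm]
  congr 1

/-- the moment identity for the truncated system: for any real weights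
`(gᵢ)` and `1 ≤ m < n`,
`∑_{i=m}^{n} gᵢ dMᵢⁿ/dt + ∑_{i=m}^{n} gᵢ(pᵢ+qᵢ)Mᵢⁿ
  = g_m xⁿ k_{m−1} M_{m−1}ⁿ + ∑_{i=m}^{n−1}(g_{i+1}−gᵢ) xⁿ kᵢ Mᵢⁿ`,
expressed by saying that `t ↦ ∑_{i=m}^{n} gᵢ Mᵢⁿ(t)` has derivative equal to the
right-hand side minus `∑_{i=m}^{n} gᵢ(pᵢ+qᵢ)Mᵢⁿ`. -/
theorem trunc_moment_identity
    (n : ℕ) (hn : 2 ≤ n) (k p q : ℕ → ℝ)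
    (hk : ∀ i, 0 ≤ k i) (hp : ∀ i, 0 ≤ p i) (hq : ∀ i, 0 ≤ q i)
    (r α : ℝ) (hr : 0 ≤ r) (hα : 0 ≤ α)
    (x : ℝ → ℝ) (M : ℕ → ℝ → ℝ)
    (g : ℕ → ℝ) (m : ℕ) (hm : 1 ≤ m) (hmn : m < n)
    (t : ℝ) (ht : 0 ≤ t) (hsol : TruncSol n k p q r α x M t) :
    HasDerivAt (fun s => ∑ i ∈ Finset.Icc m n, g i * M i s)
      (g m * x t * k (m-1) * M (m-1) t
        + (∑ i ∈ Finset.Ico m n, (g (i+1) - g i) * x t * k i * M i t)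
        - ∑ i ∈ Finset.Icc m n, g i * (p i + q i) * M i t) t := by
  obtain ⟨h0, hmid, hn', hx⟩ := hsol
  set A := x t with hA
  have key : ∀ i ∈ Finset.Icc m n, HasDerivAt (fun s => g i * M i s)
      (g i * (if i = n then k (n-1) * A * M (n-1) t - (p n + q n) * M n t
              else k (i-1) * A * M (i-1) t - k i * A * M i t - (p i + q i) * M i t)) t := by
    intro i hi
    simp only [Finset.mem_Icc] at hi
    by_cases hin : i = n
    · subst hin
      simpa using hn'.const_mul (g i)
    · have h1 : 1 ≤ i := le_trans hm hi.1
      have h2 : i ≤ n - 1 := by omega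
      simpa [hin] using (hmid i h1 h2).const_mul (g i)
  have hd := HasDerivAt.fun_sum key
  refine hd.congr_deriv ?_
  have hmn' : m ≤ n := le_of_lt hmn
  have hsplitD : (∑ i ∈ Finset.Icc m n,
      g i * (if i = n then k (n-1) * A * M (n-1) t - (p n + q n) * M n t
              else k (i-1) * A * M (i-1) t - k i * A * M i t - (p i + q i) * M i t))
      = (∑ i ∈ Finset.Ico m n,
          (g i * k (i-1) * A * M (i-1) t
            - (g i * k i * A * M i t + g i * (p i + q i) * M i t)))
        + (g n * k (n-1) * A * M (n-1) t - g n * (p n + q n) * M n t) := by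
    rw [← Finset.Ico_add_one_right_eq_Icc, Finset.sum_Ico_succ_top hmn', if_pos rfl]
    congr 1
    · refine Finset.sum_congr rfl fun i hi => ?_
      rw [Finset.mem_Ico] at hi
      rw [if_neg (Nat.ne_of_lt hi.2)]
      ring
    · ring
  rw [hsplitD, Finset.sum_sub_distrib, Finset.sum_add_distrib]
  have hsplit1 : ∑ i ∈ Finset.Icc m n, g i * k (i-1) * A * M (i-1) t
      = (∑ i ∈ Finset.Ico m n, g i * k (i-1) * A * M (i-1) t)
        + g n * k (n-1) * A * M (n-1) t := by
    rw [← Finset.Ico_add_one_right_eq_Icc, Finset.sum_Ico_succ_top hmn']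
  have hsplit2 : ∑ i ∈ Finset.Icc m n, g i * (p i + q i) * M i t
      = (∑ i ∈ Finset.Ico m n, g i * (p i + q i) * M i t)
        + g n * (p n + q n) * M n t := by
    rw [← Finset.Ico_add_one_right_eq_Icc, Finset.sum_Ico_succ_top hmn']
  have hexp : ∑ i ∈ Finset.Ico m n, (g (i+1) - g i) * A * k i * M i t
      = (∑ i ∈ Finset.Ico m n, g (i+1) * k i * A * M i t)
        - ∑ i ∈ Finset.Ico m n, g i * k i * A * M i t := by
    rw [← Finset.sum_sub_distrib]
    exact Finset.sum_congr rfl fun i _ => by ring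
  have hshift := icc_shift (fun i => g i * k (i-1) * A * M (i-1) t) hmn'
  simp only [Nat.add_sub_cancel] at hshift
  have hkey : (∑ i ∈ Finset.Ico m n, g i * k (i-1) * A * M (i-1) t)
      + g n * k (n-1) * A * M (n-1) t
      = g m * k (m-1) * A * M (m-1) t
        + ∑ i ∈ Finset.Ico m n, g (i+1) * k i * A * M i t := by
    rw [← hsplit1, hshift]
  rw [hsplit2, hexp]
  have hgm : g m * A * k (m-1) * M (m-1) t = g m * k (m-1) * A * M (m-1) t := by ring
  rw [hgm]
  linarith [hkey]
end
end

section
/- Any global solution of the truncated silicosis system with nonnegative initial data satisfies, for all t ≥ 0, the a priori bound ‖yⁿ(t)‖ ≤ ‖yⁿ(0)‖ + (α+r)t, where ‖yⁿ(t)‖ = x^n(t) + Σ_{i=0}^{n}(i+1)M_i^n(t). In particular, for every i, 0 ≤ M_i^n(t) ≤ (‖yⁿ(0)‖ + (α+r)t)/(i+1). -/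
open MeasureTheory Set Filter

noncomputable section

/-- The norm `‖yⁿ(t)‖ = xⁿ(t) + ∑_{i=0}^{n} (i+1) Mᵢⁿ(t)` (for nonnegative components). -/
def TruncNorm (n : ℕ) (x : ℝ → ℝ) (M : ℕ → ℝ → ℝ) (t : ℝ) : ℝ :=
  x t + ∑ i ∈ Finset.range (n+1), ((i : ℝ) + 1) * M i t

/-- a priori bound for global nonnegative solutions of the truncated
system: `‖yⁿ(t)‖ ≤ ‖yⁿ(0)‖ + (α+r)t` and, for every `i ≤ n`,
`0 ≤ Mᵢⁿ(t) ≤ (‖yⁿ(0)‖ + (α+r)t)/(i+1)`. -/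
theorem trunc_apriori_bound
    (n : ℕ) (hn : 2 ≤ n) (k p q : ℕ → ℝ)
    (hk : ∀ i, 0 ≤ k i) (hp : ∀ i, 0 ≤ p i) (hq : ∀ i, 0 ≤ q i)
    (r α : ℝ) (hr : 0 ≤ r) (hα : 0 ≤ α)
    (x : ℝ → ℝ) (M : ℕ → ℝ → ℝ)
    (hsol : ∀ t : ℝ, 0 ≤ t → TruncSol n k p q r α x M t)
    (hxpos : ∀ t : ℝ, 0 ≤ t → 0 ≤ x t)
    (hMpos : ∀ i ≤ n, ∀ t : ℝ, 0 ≤ t → 0 ≤ M i t) :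
    ∀ t : ℝ, 0 ≤ t →
      TruncNorm n x M t ≤ TruncNorm n x M 0 + (α + r) * t ∧
      ∀ i ≤ n, 0 ≤ M i t ∧
        M i t ≤ (TruncNorm n x M 0 + (α + r) * t) / ((i : ℝ) + 1) := by
  have hnn : n ≠ 0 := by omega
  set N : ℝ → ℝ := fun s => TruncNorm n x M s with hNdef
  set g : ℝ → ℝ := fun s => N 0 + (α + r) * s - N s with hgdef
  have hderiv : ∀ s ∈ Ici (0:ℝ), HasDerivAt g
      (∑ i ∈ Finset.range (n+1), (((i:ℝ)+1) * p i + q i) * M i s) s := by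
    intro s hs
    obtain ⟨h0, hmid, hlast, hx⟩ := hsol s hs
    set d : ℕ → ℝ := fun i =>
      (if i = 0 then r else k (i-1) * x s * M (i-1) s)
      - (if i = n then 0 else k i * x s * M i s) - (p i + q i) * M i s with hd
    have hMd : ∀ i ∈ Finset.range (n+1), HasDerivAt (M i) (d i) s := by
      intro i hi
      simp only [Finset.mem_range] at hi
      rcases eq_or_ne i 0 with h | h
      · subst h
        have hne : (0:ℕ) ≠ n := Ne.symm hnn
        have hval : d 0 = r - k 0 * x s * M 0 s - (p 0 + q 0) * M 0 s := by
          simp [hd, hne]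
        rw [hval]; exact h0
      rcases eq_or_ne i n with h' | h'
      · rw [h']
        have hval : d n = k (n-1) * x s * M (n-1) s - (p n + q n) * M n s := by
          simp [hd, hnn]
        rw [hval]; exact hlast
      · have hval : d i = k (i-1) * x s * M (i-1) s - k i * x s * M i s
            - (p i + q i) * M i s := by
          simp [hd, h, h']
        rw [hval]
        exact hmid i (Nat.one_le_iff_ne_zero.mpr h) (by omega)
    have hsumderiv : HasDerivAt (fun u => ∑ i ∈ Finset.range (n+1), ((i:ℝ)+1) * M i u)
        (∑ i ∈ Finset.range (n+1), ((i:ℝ)+1) * d i) s :=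
      HasDerivAt.fun_sum (fun i hi => (hMd i hi).const_mul _)
    have hNderiv : HasDerivAt N
        ((α - x s * ∑ i ∈ Finset.range n, k i * M i s
           + ∑ i ∈ Finset.range (n+1), (i:ℝ) * q i * M i s)
         + ∑ i ∈ Finset.range (n+1), ((i:ℝ)+1) * d i) s := hx.add hsumderiv
    have hlin : HasDerivAt (fun u => N 0 + (α + r) * u) (α + r) s := by
      simpa using ((hasDerivAt_id s).const_mul (α + r)).const_add (N 0)
    have hgd := hlin.sub hNderiv
    -- now identify the derivative value
    have hsplit : ∑ i ∈ Finset.range (n+1), ((i:ℝ)+1) * d i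
        = (∑ i ∈ Finset.range (n+1),
            ((i:ℝ)+1) * (if i = 0 then r else k (i-1) * x s * M (i-1) s))
          - (∑ i ∈ Finset.range (n+1),
            ((i:ℝ)+1) * (if i = n then 0 else k i * x s * M i s))
          - ∑ i ∈ Finset.range (n+1), ((i:ℝ)+1) * ((p i + q i) * M i s) := by
      rw [← Finset.sum_sub_distrib, ← Finset.sum_sub_distrib]
      refine Finset.sum_congr rfl fun i _ => by simp only [hd]; ring
    have hA : ∑ i ∈ Finset.range (n+1),
        ((i:ℝ)+1) * (if i = 0 then r else k (i-1) * x s * M (i-1) s)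
        = r + ∑ i ∈ Finset.range n, ((i:ℝ)+2) * (k i * x s * M i s) := by
      have hstep : ∀ i ∈ Finset.range n,
          ((↑(i+1):ℝ)+1) * (if i+1 = 0 then r else k (i+1-1) * x s * M (i+1-1) s)
          = ((i:ℝ)+2) * (k i * x s * M i s) := by
        intro i _
        rw [if_neg (Nat.succ_ne_zero i), Nat.add_sub_cancel]
        push_cast
        ring
      rw [Finset.sum_range_succ', Finset.sum_congr rfl hstep, if_pos rfl]
      push_cast
      ring
    have hB : ∑ i ∈ Finset.range (n+1),
        ((i:ℝ)+1) * (if i = n then 0 else k i * x s * M i s)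
        = ∑ i ∈ Finset.range n, ((i:ℝ)+1) * (k i * x s * M i s) := by
      rw [Finset.sum_range_succ]
      rw [if_pos rfl, mul_zero, add_zero]
      exact Finset.sum_congr rfl fun i hi => by
        rw [if_neg (Finset.mem_range.mp hi).ne]
    have hAB : (∑ i ∈ Finset.range n, ((i:ℝ)+2) * (k i * x s * M i s))
        - ∑ i ∈ Finset.range n, ((i:ℝ)+1) * (k i * x s * M i s)
        = ∑ i ∈ Finset.range n, k i * x s * M i s := by
      rw [← Finset.sum_sub_distrib]
      exact Finset.sum_congr rfl fun i _ => by ring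
    have hxS : x s * ∑ i ∈ Finset.range n, k i * M i s
        = ∑ i ∈ Finset.range n, k i * x s * M i s := by
      rw [Finset.mul_sum]
      exact Finset.sum_congr rfl fun i _ => by ring
    have hPQ : (∑ i ∈ Finset.range (n+1), ((i:ℝ)+1) * ((p i + q i) * M i s))
        - ∑ i ∈ Finset.range (n+1), (i:ℝ) * q i * M i s
        = ∑ i ∈ Finset.range (n+1), (((i:ℝ)+1) * p i + q i) * M i s := by
      rw [← Finset.sum_sub_distrib]
      exact Finset.sum_congr rfl fun i _ => by ring
    have hval : (α + r)
        - ((α - x s * ∑ i ∈ Finset.range n, k i * M i s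
           + ∑ i ∈ Finset.range (n+1), (i:ℝ) * q i * M i s)
         + ∑ i ∈ Finset.range (n+1), ((i:ℝ)+1) * d i)
        = ∑ i ∈ Finset.range (n+1), (((i:ℝ)+1) * p i + q i) * M i s := by
      rw [hsplit, hA, hxS]
      linarith [hAB, hPQ]
    rw [hval] at hgd
    exact hgd
  have hmono : MonotoneOn g (Ici (0:ℝ)) := by
    apply monotoneOn_of_deriv_nonneg (convex_Ici 0)
    · exact fun u hu => (hderiv u hu).continuousAt.continuousWithinAt
    · intro u hu
      rw [interior_Ici] at hu
      exact (hderiv u (mem_Ici.mpr (le_of_lt hu))).differentiableAt.differentiableWithinAt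
    · intro u hu
      rw [interior_Ici] at hu
      rw [(hderiv u (mem_Ici.mpr (le_of_lt hu))).deriv]
      refine Finset.sum_nonneg fun i hi => mul_nonneg ?_ ?_
      · have := hp i; have := hq i; positivity
      · exact hMpos i (Nat.lt_succ_iff.mp (Finset.mem_range.mp hi)) u hu.le
  intro t ht
  have hg0 : g 0 = 0 := by simp [hgdef]
  have hgt : 0 ≤ g t := by
    rw [← hg0]
    exact hmono self_mem_Ici ht ht
  have key : N t ≤ N 0 + (α + r) * t := by
    simp only [hgdef] at hgt; linarith
  refine ⟨key, fun i hi => ?_⟩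
  have hM := hMpos i hi t ht
  refine ⟨hM, ?_⟩
  have hsingle : ((i:ℝ)+1) * M i t ≤ ∑ j ∈ Finset.range (n+1), ((j:ℝ)+1) * M j t := by
    refine Finset.single_le_sum (f := fun (j : ℕ) => ((j:ℝ)+1) * M j t) (fun j hj => mul_nonneg (by positivity)
      (hMpos j (Nat.lt_succ_iff.mp (Finset.mem_range.mp hj)) t ht)) (Finset.mem_range.mpr (Nat.lt_succ_of_le hi))
  have hNt : ((i:ℝ)+1) * M i t ≤ N t := by
    have hx0 := hxpos t ht
    simp only [hNdef, TruncNorm]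
    linarith
  rw [le_div_iff₀ (by positivity : (0:ℝ) < (i:ℝ)+1)]
  calc M i t * ((i:ℝ)+1) = ((i:ℝ)+1) * M i t := by ring
    _ ≤ N t := hNt
    _ ≤ TruncNorm n x M 0 + (α + r) * t := key
end
end

section
/- Let y be a solution of the silicosis system on [0,T) and (g_i) a real sequence. Fix 0 ≤ t_1 < t_2 < T with ∫_{t_1}^{t_2} Σ_i |g_{i+1}−g_i| k_i M_i(s) ds < ∞. If either (A) g_i = O(i) and ∫_{t_1}^{t_2} Σ_i g_i(p_i+q_i)M_i(s) ds < ∞, or (B) Σ_i g_i M_i(t_p) < ∞ for p = 1, 2 and g_{i+1} ≥ g_i ≥ 0 for sufficiently large i, then for every m ≥ 1: Σ_{i≥m} g_i M_i(t_2) − Σ_{i≥m} g_i M_i(t_1) + ∫_{t_1}^{t_2} Σ_{i≥m} g_i(p_i+q_i)M_i ds = ∫_{t_1}^{t_2} g_m x k_{m−1} M_{m−1} ds + ∫_{t_1}^{t_2} Σ_{i≥m}(g_{i+1}−g_i) x k_i M_i ds. -/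
open MeasureTheory Set Filter

noncomputable section

/-- A solution of the silicosis system (Definition 2.2) on the time domain `D`
(`D = Set.Ico 0 T` or `D = Set.Ici 0`): componentwise continuous, nonnegative,
with locally bounded norm `‖y(t)‖ = x(t) + ∑ (i+1) Mᵢ(t)`, the integrability
conditions, and the integrated versions of the equations. -/
structure IsSol (k p q : ℕ → ℝ) (r α : ℝ) (D : Set ℝ) (x : ℝ → ℝ) (M : ℕ → ℝ → ℝ) : Prop where
  x_nonneg : ∀ t ∈ D, 0 ≤ x t
  M_nonneg : ∀ (i : ℕ), ∀ t ∈ D, 0 ≤ M i t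
  x_cont : ContinuousOn x D
  M_cont : ∀ i : ℕ, ContinuousOn (M i) D
  summable_norm : ∀ t ∈ D, Summable (fun i : ℕ => ((i : ℝ) + 1) * M i t)
  norm_bdd : ∀ T' : ℝ, Icc (0:ℝ) T' ⊆ D →
    ∃ C : ℝ, ∀ t ∈ Icc (0:ℝ) T', x t + ∑' i : ℕ, ((i : ℝ) + 1) * M i t ≤ C
  summable_mom : ∀ t ∈ D,
    Summable (fun i : ℕ => ((i : ℝ) * p i + (i : ℝ) * q i + k i) * M i t)
  x_int : ∀ t ∈ D, IntervalIntegrable x volume 0 t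
  mom_int : ∀ t ∈ D,
    IntervalIntegrable (fun s => ∑' i : ℕ, ((i : ℝ) * p i + (i : ℝ) * q i + k i) * M i s)
      volume 0 t
  eq_M0 : ∀ t ∈ D,
    M 0 t = M 0 0 + r * t - ∫ s in (0:ℝ)..t, (k 0 * x s * M 0 s + (p 0 + q 0) * M 0 s)
  eq_M : ∀ i : ℕ, 1 ≤ i → ∀ t ∈ D,
    M i t = M i 0 + ∫ s in (0:ℝ)..t,
      (k (i-1) * x s * M (i-1) s - k i * x s * M i s - (p i + q i) * M i s)
  eq_x : ∀ t ∈ D,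
    x t = x 0 + α * t + ∫ s in (0:ℝ)..t,
      (-(x s * ∑' i : ℕ, k i * M i s) + ∑' i : ℕ, (i : ℝ) * q i * M i s)

lemma tele_aux (g u : ℕ → ℝ) (m : ℕ) : ∀ n : ℕ,
    ∑ j ∈ Finset.range (n+1), (g (m+j) * u (m+j-1) - g (m+j) * u (m+j))
      = g m * u (m-1) + (∑ j ∈ Finset.range n, (g (m+j+1) - g (m+j)) * u (m+j))
        - g (m+n) * u (m+n) := by
  intro n
  induction n with
  | zero => simp
  | succ n ih =>
      rw [Finset.sum_range_succ, ih, Finset.sum_range_succ]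
      have h1 : m + (n+1) - 1 = m + n := by omega
      have h2 : m + (n+1) = m + n + 1 := by omega
      rw [h1, h2]
      ring

lemma freq_small (u : ℕ → ℝ) (hu0 : ∀ n, 0 ≤ u n) (hu : Summable u) {δ : ℝ} (hδ : 0 < δ) :
    ∃ᶠ n : ℕ in atTop, ((n:ℝ)+1) * u n < δ := by
  by_contra h
  rw [Filter.not_frequently] at h
  obtain ⟨K, hK⟩ := Filter.eventually_atTop.1 h
  have key : ∀ n : ℕ, δ * (1/((n:ℝ)+(K:ℝ)+1)) ≤ u (n + K) := by
    intro n
    have h1 := hK (n+K) (by omega)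
    push_neg at h1
    have hpos : (0:ℝ) < (n:ℝ)+(K:ℝ)+1 := by positivity
    rw [mul_one_div, div_le_iff₀ hpos]
    have h2 : (((n+K:ℕ)):ℝ) + 1 = (n:ℝ)+(K:ℝ)+1 := by push_cast; ring
    calc δ ≤ (((n+K:ℕ):ℝ)+1) * u (n+K) := h1
      _ = u (n+K) * ((n:ℝ)+(K:ℝ)+1) := by rw [← h2]; ring
  have hsum : Summable (fun n : ℕ => δ * (1/((n:ℝ)+(K:ℝ)+1))) :=
    Summable.of_nonneg_of_le (fun n => by positivity) key ((summable_nat_add_iff K).2 hu)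
  have hsum2 : Summable (fun n : ℕ => 1/((n:ℝ)+(K:ℝ)+1)) := by
    have := hsum.mul_left (1/δ)
    apply this.congr
    intro n
    field_simp
  have hsum3 : Summable (fun n : ℕ => 1/((n:ℝ))) := by
    rw [← summable_nat_add_iff (K+1)]
    apply hsum2.congr
    intro n
    push_cast
    ring_nf
  exact Real.not_summable_one_div_natCast hsum3

lemma exists_min_tail (u : ℕ → ℝ) (hu : Tendsto u atTop (nhds 0)) (N' : ℕ)
    (hpos : ∀ n, N' ≤ n → 0 < u n) (n1 : ℕ) :
    ∃ n, n1 ≤ n ∧ N' ≤ n ∧ ∀ i, N' ≤ i → i ≤ n → u n ≤ u i := by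
  set m1 := max n1 N' with hm1
  have hne : (Finset.Icc N' m1).Nonempty :=
    ⟨N', Finset.mem_Icc.2 ⟨le_rfl, le_max_right _ _⟩⟩
  obtain ⟨i0, hi0, hmin0⟩ := Finset.exists_min_image (Finset.Icc N' m1) u hne
  have hδ : 0 < u i0 := hpos i0 (Finset.mem_Icc.1 hi0).1
  have hev : ∀ᶠ n : ℕ in atTop, u n < u i0 := hu.eventually_lt_const hδ
  obtain ⟨R0, hR0⟩ := Filter.eventually_atTop.1 hev
  set R := max R0 (m1+1) with hR
  have hRlt : u R < u i0 := hR0 R (le_max_left _ _)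
  have hNR : N' ≤ R := le_trans (le_max_right _ _) (le_trans (Nat.le_succ _) (le_max_right _ _))
  obtain ⟨n, hn, hminn⟩ := Finset.exists_min_image (Finset.Icc N' R) u
    ⟨N', Finset.mem_Icc.2 ⟨le_rfl, hNR⟩⟩
  have hnN : N' ≤ n := (Finset.mem_Icc.1 hn).1
  have hun : u n < u i0 :=
    lt_of_le_of_lt (hminn R (Finset.mem_Icc.2 ⟨hNR, le_rfl⟩)) hRlt
  have hnm1 : m1 < n := by
    by_contra hc
    push_neg at hc
    exact absurd (hmin0 n (Finset.mem_Icc.2 ⟨hnN, hc⟩)) (not_le.2 hun)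
  refine ⟨n, le_trans (le_max_left _ _) hnm1.le, hnN, fun i hNi hin => ?_⟩
  exact hminn i (Finset.mem_Icc.2 ⟨hNi, le_trans hin (Finset.mem_Icc.1 hn).2⟩)

lemma shift_summable {f : ℕ → ℝ} (hf : Summable f) (m : ℕ) :
    Summable (fun j => f (m + j)) :=
  ((summable_nat_add_iff m).2 hf).congr (fun n => by rw [Nat.add_comm])

lemma shift_sum_le_tsum {a : ℕ → ℝ} (ha : ∀ i, 0 ≤ a i) (hs : Summable a) (N n : ℕ) :
    ∑ j ∈ Finset.range n, a (N + j) ≤ ∑' i, a i := by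
  have h1 : ∑ j ∈ Finset.range n, a (N + j) = ∑ i ∈ Finset.Ico N (N + n), a i := by
    rw [Finset.sum_Ico_eq_sum_range]
    simp
  rw [h1]
  exact Summable.sum_le_tsum _ (fun i _ => ha i) hs

lemma le_of_freq_le {f : ℕ → ℝ} {c a : ℝ} (hf : Tendsto f atTop (nhds c))
    (hfreq : ∃ᶠ n : ℕ in atTop, f n < a) : c ≤ a := by
  by_contra h
  push_neg at h
  have hev : ∀ᶠ n : ℕ in atTop, a < f n := hf.eventually_const_lt h
  obtain ⟨n, h1, h2⟩ := (hfreq.and_eventually hev).exists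
  linarith

set_option maxHeartbeats 1600000 in
/-- the integrated moment identity (Theorem 5.1). Under hypothesis
(5.1) and either hypothesis set (A) or (B), for every `m ≥ 1`,
`∑_{i≥m} gᵢ Mᵢ(t₂) − ∑_{i≥m} gᵢ Mᵢ(t₁) + ∫_{t₁}^{t₂} ∑_{i≥m} gᵢ(pᵢ+qᵢ)Mᵢ
 = ∫_{t₁}^{t₂} g_m x k_{m−1} M_{m−1} + ∫_{t₁}^{t₂} ∑_{i≥m}(g_{i+1}−gᵢ) x kᵢ Mᵢ`. -/
theorem silicosis_moment_identity
    (k p q : ℕ → ℝ)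
    (hk : ∀ i, 0 ≤ k i) (hp : ∀ i, 0 ≤ p i) (hq : ∀ i, 0 ≤ q i)
    (r α : ℝ) (hr : 0 ≤ r) (hα : 0 ≤ α)
    (T : ℝ) (x : ℝ → ℝ) (M : ℕ → ℝ → ℝ)
    (hsol : IsSol k p q r α (Set.Ico 0 T) x M)
    (g : ℕ → ℝ) (t1 t2 : ℝ) (ht1 : 0 ≤ t1) (ht12 : t1 < t2) (ht2 : t2 < T)
    -- hypothesis (5.1): ∫_{t₁}^{t₂} ∑ᵢ |g_{i+1}−gᵢ| kᵢ Mᵢ < ∞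
    (h51sum : ∀ s ∈ Icc t1 t2, Summable (fun i : ℕ => |g (i+1) - g i| * k i * M i s))
    (h51int : IntervalIntegrable
      (fun s => ∑' i : ℕ, |g (i+1) - g i| * k i * M i s) volume t1 t2)
    -- hypothesis (A) or hypothesis (B)
    (hAB :
      ((∃ CA : ℝ, ∀ i : ℕ, |g i| ≤ CA * ((i : ℝ) + 1)) ∧
        (∀ s ∈ Icc t1 t2, Summable (fun i : ℕ => g i * (p i + q i) * M i s)) ∧
        IntervalIntegrable (fun s => ∑' i : ℕ, g i * (p i + q i) * M i s) volume t1 t2)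
      ∨
      ((Summable (fun i : ℕ => g i * M i t1) ∧ Summable (fun i : ℕ => g i * M i t2)) ∧
        (∃ N : ℕ, ∀ i ≥ N, 0 ≤ g i ∧ g i ≤ g (i+1)))) :
    ∀ m : ℕ, 1 ≤ m →
      (∑' i : ℕ, g (m+i) * M (m+i) t2) - (∑' i : ℕ, g (m+i) * M (m+i) t1)
        + (∫ s in t1..t2, ∑' i : ℕ, g (m+i) * (p (m+i) + q (m+i)) * M (m+i) s)
      = (∫ s in t1..t2, g m * x s * k (m-1) * M (m-1) s)
        + ∫ s in t1..t2, ∑' i : ℕ, (g (m+i+1) - g (m+i)) * x s * k (m+i) * M (m+i) s := by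
  intro m hm
  have ht1t2 : t1 ≤ t2 := ht12.le
  have ht2D : t2 ∈ Ico (0:ℝ) T := ⟨le_trans ht1 ht1t2, ht2⟩
  have ht1D : t1 ∈ Ico (0:ℝ) T := ⟨ht1, lt_of_le_of_lt ht1t2 ht2⟩
  have hsub2 : Icc (0:ℝ) t2 ⊆ Ico 0 T := fun s hs => ⟨hs.1, lt_of_le_of_lt hs.2 ht2⟩
  have hsubI : Icc t1 t2 ⊆ Icc (0:ℝ) t2 := Icc_subset_Icc ht1 le_rfl
  have hID : Icc t1 t2 ⊆ Ico (0:ℝ) T := fun s hs => hsub2 (hsubI hs)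
  have hxC : ContinuousOn x (Icc 0 t2) := hsol.x_cont.mono hsub2
  have hMC : ∀ i, ContinuousOn (M i) (Icc 0 t2) := fun i => (hsol.M_cont i).mono hsub2
  have hII : ∀ f : ℝ → ℝ, ContinuousOn f (Icc 0 t2) →
      (IntervalIntegrable f volume 0 t1 ∧ IntervalIntegrable f volume 0 t2 ∧
       IntervalIntegrable f volume t1 t2) := by
    intro f hf
    have e1 : uIcc (0:ℝ) t1 ⊆ Icc 0 t2 := by
      rw [uIcc_of_le ht1]; exact Icc_subset_Icc le_rfl ht1t2
    have e2 : uIcc (0:ℝ) t2 ⊆ Icc 0 t2 := by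
      rw [uIcc_of_le (le_trans ht1 ht1t2)]
    have e3 : uIcc t1 t2 ⊆ Icc 0 t2 := by
      rw [uIcc_of_le ht1t2]; exact hsubI
    exact ⟨(hf.mono e1).intervalIntegrable, (hf.mono e2).intervalIntegrable,
      (hf.mono e3).intervalIntegrable⟩
  obtain ⟨B, hB⟩ := isCompact_Icc.exists_bound_of_continuousOn hxC
  have hxB : ∀ s ∈ Icc (0:ℝ) t2, x s ≤ B := fun s hs =>
    (le_abs_self _).trans (by simpa [Real.norm_eq_abs] using hB s hs)
  have hB0 : 0 ≤ B :=
    le_trans (hsol.x_nonneg t2 ht2D) (hxB t2 (right_mem_Icc.2 (le_trans ht1 ht1t2)))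
  have hxnn : ∀ s ∈ Icc t1 t2, 0 ≤ x s := fun s hs => hsol.x_nonneg s (hID hs)
  have hMnn : ∀ i : ℕ, ∀ s ∈ Icc t1 t2, 0 ≤ M i s := fun i s hs => hsol.M_nonneg i s (hID hs)
  -- local quantities
  obtain ⟨u, hu_def⟩ : ∃ u : ℕ → ℝ, u = fun i : ℕ => ∫ s in t1..t2, x s * k i * M i s := ⟨_, rfl⟩
  obtain ⟨IP, hIP_def⟩ : ∃ IP : ℕ → ℝ, IP = fun i : ℕ => ∫ s in t1..t2, g i * (p i + q i) * M i s := ⟨_, rfl⟩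
  obtain ⟨AIP, hAIP_def⟩ : ∃ AIP : ℕ → ℝ, AIP = fun i : ℕ => ∫ s in t1..t2, |g i| * ((p i + q i) * M i s) := ⟨_, rfl⟩
  obtain ⟨W, hW_def⟩ : ∃ W : ℕ → ℝ, W = fun i : ℕ => ∫ s in t1..t2, ((i:ℝ) * p i + (i:ℝ) * q i + k i) * M i s := ⟨_, rfl⟩
  obtain ⟨Z, hZ_def⟩ : ∃ Z : ℕ → ℝ, Z = fun i : ℕ => ∫ s in t1..t2, |g (i+1) - g i| * (k i * M i s) := ⟨_, rfl⟩
  -- continuity of integrands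
  have hCxkM : ∀ i : ℕ, ContinuousOn (fun s => x s * k i * M i s) (Icc 0 t2) :=
    fun i => (hxC.mul continuousOn_const).mul (hMC i)
  have hCpqM : ∀ i : ℕ, ContinuousOn (fun s => (p i + q i) * M i s) (Icc 0 t2) :=
    fun i => continuousOn_const.mul (hMC i)
  have hCW : ∀ i : ℕ, ContinuousOn (fun s => ((i:ℝ) * p i + (i:ℝ) * q i + k i) * M i s)
      (Icc 0 t2) := fun i => continuousOn_const.mul (hMC i)
  have hCZ : ∀ i : ℕ, ContinuousOn (fun s => |g (i+1) - g i| * (k i * M i s)) (Icc 0 t2) :=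
    fun i => continuousOn_const.mul (continuousOn_const.mul (hMC i))
  have hmomI : IntervalIntegrable
      (fun s => ∑' i : ℕ, ((i:ℝ) * p i + (i:ℝ) * q i + k i) * M i s) volume t1 t2 :=
    (hsol.mom_int t1 ht1D).symm.trans (hsol.mom_int t2 ht2D)
  -- nonnegativity
  have hWinn : ∀ i : ℕ, ∀ s ∈ Icc t1 t2, 0 ≤ ((i:ℝ) * p i + (i:ℝ) * q i + k i) * M i s := by
    intro i s hs
    have : (0:ℝ) ≤ (i:ℝ) * p i + (i:ℝ) * q i + k i := by
      have := Nat.cast_nonneg (α := ℝ) i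
      nlinarith [hp i, hq i, hk i]
    exact mul_nonneg this (hMnn i s hs)
  have hunn : ∀ i, 0 ≤ u i := by
    intro i
    simp only [hu_def]
    exact intervalIntegral.integral_nonneg ht1t2
      (fun s hs => mul_nonneg (mul_nonneg (hxnn s hs) (hk i)) (hMnn i s hs))
  have hWnn : ∀ i, 0 ≤ W i := by
    intro i
    simp only [hW_def]
    exact intervalIntegral.integral_nonneg ht1t2 (fun s hs => hWinn i s hs)
  have hZnn : ∀ i, 0 ≤ Z i := by
    intro i
    simp only [hZ_def]
    exact intervalIntegral.integral_nonneg ht1t2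
      (fun s hs => mul_nonneg (abs_nonneg _) (mul_nonneg (hk i) (hMnn i s hs)))
  have hAIPnn : ∀ i, 0 ≤ AIP i := by
    intro i
    simp only [hAIP_def]
    exact intervalIntegral.integral_nonneg ht1t2
      (fun s hs => mul_nonneg (abs_nonneg _)
        (mul_nonneg (add_nonneg (hp i) (hq i)) (hMnn i s hs)))
  -- u i ≤ B * W i
  have huW : ∀ i, u i ≤ B * W i := by
    intro i
    simp only [hu_def, hW_def]
    rw [← intervalIntegral.integral_const_mul]
    apply intervalIntegral.integral_mono_on ht1t2 ((hII _ (hCxkM i)).2.2)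
      ((hII _ (continuousOn_const.mul (hCW i))).2.2)
    intro s hs
    have h1 : x s ≤ B := hxB s (hsubI hs)
    have h2 : 0 ≤ k i * M i s := mul_nonneg (hk i) (hMnn i s hs)
    have h3 : x s * k i * M i s ≤ B * (k i * M i s) := by
      have := mul_le_mul_of_nonneg_right h1 h2
      nlinarith [this]
    have h4 : B * (k i * M i s) ≤ B * (((i:ℝ) * p i + (i:ℝ) * q i + k i) * M i s) := by
      apply mul_le_mul_of_nonneg_left _ hB0
      nlinarith [mul_nonneg (mul_nonneg (Nat.cast_nonneg (α := ℝ) i) (hp i)) (hMnn i s hs),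
        mul_nonneg (mul_nonneg (Nat.cast_nonneg (α := ℝ) i) (hq i)) (hMnn i s hs)]
    simp only [Pi.mul_apply]
    linarith
  -- W summable
  have hWsum : Summable W := by
    apply summable_of_sum_range_le hWnn
    intro n
    have h1 : ∑ i ∈ Finset.range n, W i
        = ∫ s in t1..t2, ∑ i ∈ Finset.range n, ((i:ℝ) * p i + (i:ℝ) * q i + k i) * M i s := by
      rw [hW_def]
      exact (intervalIntegral.integral_finset_sum (fun i _ => (hII _ (hCW i)).2.2)).symm
    rw [h1]
    apply intervalIntegral.integral_mono_on ht1t2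
      ((hII _ (continuousOn_finset_sum _ (fun i _ => hCW i))).2.2) hmomI
    intro s hs
    exact Summable.sum_le_tsum _ (fun i _ => hWinn i s hs) (hsol.summable_mom s (hID hs))
  -- Z summable
  have hZsum : Summable Z := by
    apply summable_of_sum_range_le hZnn
    intro n
    have h1 : ∑ i ∈ Finset.range n, Z i
        = ∫ s in t1..t2, ∑ i ∈ Finset.range n, |g (i+1) - g i| * (k i * M i s) := by
      rw [hZ_def]
      exact (intervalIntegral.integral_finset_sum (fun i _ => (hII _ (hCZ i)).2.2)).symm
    rw [h1]
    apply intervalIntegral.integral_mono_on ht1t2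
      ((hII _ (continuousOn_finset_sum _ (fun i _ => hCZ i))).2.2) h51int
    intro s hs
    have hsum := h51sum s hs
    have := Summable.sum_le_tsum (Finset.range n)
      (fun i _ => mul_nonneg (mul_nonneg (abs_nonneg _) (hk i)) (hMnn i s hs)) hsum
    refine le_trans (le_of_eq ?_) (this.trans (le_of_eq (tsum_congr (fun i => by ring))))
    exact Finset.sum_congr rfl (fun i _ => by ring)
  have husum : Summable u := Summable.of_nonneg_of_le hunn huW (hWsum.mul_left B)
  have hu0 : Tendsto u atTop (nhds 0) := husum.tendsto_atTop_zero
  -- |Δg| * u summable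
  have hΔuB : ∀ i : ℕ, |g (i+1) - g i| * u i ≤ B * Z i := by
    intro i
    simp only [hu_def, hZ_def]
    rw [← intervalIntegral.integral_const_mul, ← intervalIntegral.integral_const_mul]
    apply intervalIntegral.integral_mono_on ht1t2
      ((hII _ (continuousOn_const.mul (hCxkM i))).2.2)
      ((hII _ (continuousOn_const.mul (hCZ i))).2.2)
    intro s hs
    have h1 : x s ≤ B := hxB s (hsubI hs)
    have h2 : 0 ≤ k i * M i s := mul_nonneg (hk i) (hMnn i s hs)
    have h3 : 0 ≤ x s := hxnn s hs
    have := abs_nonneg (g (i+1) - g i)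
    simp only [Pi.mul_apply]
    nlinarith [mul_le_mul_of_nonneg_right h1 h2]
  have hΔuSum : Summable (fun i => |g (i+1) - g i| * u i) :=
    Summable.of_nonneg_of_le (fun i => mul_nonneg (abs_nonneg _) (hunn i)) hΔuB
      (hZsum.mul_left B)
  have hΔuSum' : Summable (fun i => (g (i+1) - g i) * u i) := by
    apply Summable.of_abs
    apply hΔuSum.congr
    intro i
    rw [abs_mul, abs_of_nonneg (hunn i)]
  -- single equation
  have hsingle : ∀ i : ℕ, 1 ≤ i →
      g i * M i t2 - g i * M i t1 + IP i = g i * u (i-1) - g i * u i := by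
    intro i hi
    have hCk1 : ContinuousOn (fun s => k (i-1) * x s * M (i-1) s) (Icc 0 t2) :=
      (continuousOn_const.mul hxC).mul (hMC (i-1))
    have hCk2 : ContinuousOn (fun s => k i * x s * M i s) (Icc 0 t2) :=
      (continuousOn_const.mul hxC).mul (hMC i)
    have hCe : ContinuousOn (fun s => k (i-1) * x s * M (i-1) s - k i * x s * M i s
        - (p i + q i) * M i s) (Icc 0 t2) := (hCk1.sub hCk2).sub (hCpqM i)
    obtain ⟨hIe1, hIe2, hIe12⟩ := hII _ hCe
    have hMd : M i t2 - M i t1 = ∫ s in t1..t2, (k (i-1) * x s * M (i-1) s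
        - k i * x s * M i s - (p i + q i) * M i s) := by
      rw [hsol.eq_M i hi t2 ht2D, hsol.eq_M i hi t1 ht1D]
      have hadj := intervalIntegral.integral_add_adjacent_intervals hIe1 hIe12
      linarith [hadj]
    have hsplit : (∫ s in t1..t2, (k (i-1) * x s * M (i-1) s - k i * x s * M i s
          - (p i + q i) * M i s))
        = (∫ s in t1..t2, k (i-1) * x s * M (i-1) s)
          - (∫ s in t1..t2, k i * x s * M i s)
          - (∫ s in t1..t2, (p i + q i) * M i s) := by
      rw [intervalIntegral.integral_sub (((hII _ hCk1).2.2).sub ((hII _ hCk2).2.2))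
        ((hII _ (hCpqM i)).2.2),
        intervalIntegral.integral_sub ((hII _ hCk1).2.2) ((hII _ hCk2).2.2)]
    have hval1 : (∫ s in t1..t2, k (i-1) * x s * M (i-1) s) = u (i-1) := by
      rw [hu_def]
      apply intervalIntegral.integral_congr
      intro s _
      dsimp only
      ring
    have hval2 : (∫ s in t1..t2, k i * x s * M i s) = u i := by
      rw [hu_def]
      apply intervalIntegral.integral_congr
      intro s _
      dsimp only
      ring
    have hIPv : IP i = g i * ∫ s in t1..t2, (p i + q i) * M i s := by
      rw [hIP_def, ← intervalIntegral.integral_const_mul]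
      apply intervalIntegral.integral_congr
      intro s _
      dsimp only
      ring
    have hgMd : g i * (M i t2 - M i t1)
        = g i * (u (i-1) - u i - ∫ s in t1..t2, (p i + q i) * M i s) := by
      rw [hMd, hsplit, hval1, hval2]
    rw [hIPv]
    nlinarith [hgMd]
  -- |IP| ≤ AIP
  have hIPabs : ∀ i : ℕ, |IP i| ≤ AIP i := by
    intro i
    simp only [hIP_def, hAIP_def]
    refine (intervalIntegral.abs_integral_le_integral_abs ht1t2).trans (le_of_eq ?_)
    apply intervalIntegral.integral_congr
    intro s hs
    rw [uIcc_of_le ht1t2] at hs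
    dsimp only
    rw [abs_mul, abs_mul, abs_of_nonneg (add_nonneg (hp i) (hq i)),
      abs_of_nonneg (hMnn i s hs), mul_assoc]
  have hIPsum_of : Summable AIP → Summable IP := fun h =>
    Summable.of_abs (Summable.of_nonneg_of_le (fun i => abs_nonneg _) hIPabs h)
  -- summability of the telescoped terms, at any base index
  have hGsum_of : ∀ m' : ℕ, 1 ≤ m' → Summable (fun i => g i * M i t1) →
      Summable (fun i => g i * M i t2) → Summable IP →
      Summable (fun j => g (m'+j) * u (m'+j-1) - g (m'+j) * u (m'+j)) := by
    intro m' hm' h1 h2 hIPs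
    have hs2 := shift_summable h2 m'
    have hs1 := shift_summable h1 m'
    have hsIP := shift_summable hIPs m'
    exact ((hs2.sub hs1).add hsIP).congr
      (fun j => hsingle (m'+j) (le_trans hm' (Nat.le_add_right m' j)))
  -- convergence of g n * u n
  have hconv : Summable (fun i => g i * M i t1) → Summable (fun i => g i * M i t2) →
      Summable AIP → ∃ c : ℝ, Tendsto (fun n => g n * u n) atTop (nhds c) := by
    intro h1 h2 hA
    have hG : Summable (fun j => g (1+j) * u (1+j-1) - g (1+j) * u (1+j)) :=
      hGsum_of 1 le_rfl h1 h2 (hIPsum_of hA)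
    have hΔshift : Summable (fun j => (g (1+j+1) - g (1+j)) * u (1+j)) :=
      shift_summable hΔuSum' 1
    have hT1 : Tendsto (fun n => ∑ j ∈ Finset.range (n+1),
        (g (1+j) * u (1+j-1) - g (1+j) * u (1+j))) atTop
        (nhds (∑' j, (g (1+j) * u (1+j-1) - g (1+j) * u (1+j)))) :=
      (tendsto_add_atTop_iff_nat 1).2 hG.hasSum.tendsto_sum_nat
    have hT2 : Tendsto (fun n => ∑ j ∈ Finset.range n, (g (1+j+1) - g (1+j)) * u (1+j))
        atTop (nhds (∑' j, (g (1+j+1) - g (1+j)) * u (1+j))) :=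
      hΔshift.hasSum.tendsto_sum_nat
    refine ⟨g 1 * u 0 + (∑' j, (g (1+j+1) - g (1+j)) * u (1+j))
      - (∑' j, (g (1+j) * u (1+j-1) - g (1+j) * u (1+j))), ?_⟩
    rw [← tendsto_add_atTop_iff_nat 1]
    have hmain : Tendsto (fun n => g (1+n) * u (1+n)) atTop
        (nhds (g 1 * u 0 + (∑' j, (g (1+j+1) - g (1+j)) * u (1+j))
          - (∑' j, (g (1+j) * u (1+j-1) - g (1+j) * u (1+j))))) := by
      apply Tendsto.congr _ ((tendsto_const_nhds.add hT2).sub hT1)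
      intro n
      have := tele_aux g u 1 n
      simp only [Nat.sub_self] at this
      linarith [this]
    exact hmain.congr (fun n => by rw [Nat.add_comm])
  -- case analysis: produce the key facts
  have hkey : Summable (fun i => g i * M i t1) ∧ Summable (fun i => g i * M i t2) ∧
      Summable AIP ∧ Tendsto (fun n => g n * u n) atTop (nhds 0) := by
    rcases hAB with ⟨⟨CA, hCA⟩, hApq, hAint⟩ | ⟨⟨hgMs1, hgMs2⟩, N0, hN0⟩
    · -- case (A)
      have hCA0 : 0 ≤ CA := by
        have := hCA 0
        simp only [Nat.cast_zero, zero_add, mul_one] at this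
        exact le_trans (abs_nonneg _) this
      have hgM : ∀ t, t ∈ Ico (0:ℝ) T → Summable (fun i => g i * M i t) := by
        intro t ht
        apply Summable.of_abs
        apply Summable.of_nonneg_of_le (fun i => abs_nonneg _) _
          ((hsol.summable_norm t ht).mul_left CA)
        intro i
        rw [abs_mul, abs_of_nonneg (hsol.M_nonneg i t ht)]
        calc |g i| * M i t ≤ (CA * ((i:ℝ)+1)) * M i t :=
              mul_le_mul_of_nonneg_right (hCA i) (hsol.M_nonneg i t ht)
          _ = CA * (((i:ℝ)+1) * M i t) := by ring
      have hAIPb : ∀ j : ℕ, AIP (j+1) ≤ (2*CA) * W (j+1) := by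
        intro j
        simp only [hAIP_def, hW_def]
        rw [← intervalIntegral.integral_const_mul]
        apply intervalIntegral.integral_mono_on ht1t2
          ((hII _ (continuousOn_const.mul (hCpqM (j+1)))).2.2)
          ((hII _ (continuousOn_const.mul (hCW (j+1)))).2.2)
        intro s hs
        have ha : 0 ≤ (p (j+1) + q (j+1)) * M (j+1) s :=
          mul_nonneg (add_nonneg (hp _) (hq _)) (hMnn _ s hs)
        have hb : |g (j+1)| * ((p (j+1) + q (j+1)) * M (j+1) s)
            ≤ (CA * (((j+1:ℕ):ℝ)+1)) * ((p (j+1) + q (j+1)) * M (j+1) s) :=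
          mul_le_mul_of_nonneg_right (hCA (j+1)) ha
        have hc1 : ((j+1:ℕ):ℝ) + 1 ≤ 2 * ((j+1:ℕ):ℝ) := by
          push_cast
          have := Nat.cast_nonneg (α := ℝ) j
          linarith
        have hc2 : (CA * (((j+1:ℕ):ℝ)+1)) * ((p (j+1) + q (j+1)) * M (j+1) s)
            ≤ (CA * (2 * ((j+1:ℕ):ℝ))) * ((p (j+1) + q (j+1)) * M (j+1) s) := by
          apply mul_le_mul_of_nonneg_right _ ha
          exact mul_le_mul_of_nonneg_left hc1 hCA0
        have hc3 : (CA * (2 * ((j+1:ℕ):ℝ))) * ((p (j+1) + q (j+1)) * M (j+1) s)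
            ≤ (2*CA) * ((((j+1:ℕ):ℝ) * p (j+1) + ((j+1:ℕ):ℝ) * q (j+1) + k (j+1)) * M (j+1) s) := by
          nlinarith [mul_nonneg (mul_nonneg hCA0 (hk (j+1))) (hMnn (j+1) s hs)]
        simp only [Pi.mul_apply]
        linarith
      have hAIPsum : Summable AIP := by
        rw [← summable_nat_add_iff 1]
        exact Summable.of_nonneg_of_le (fun j => hAIPnn _) hAIPb
          (((summable_nat_add_iff 1).2 hWsum).mul_left (2*CA))
      have hgM1 := hgM t1 ht1D
      have hgM2 := hgM t2 ht2D
      obtain ⟨c, hc⟩ := hconv hgM1 hgM2 hAIPsum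
      have hc0 : c = 0 := by
        by_contra hne
        have habs : Tendsto (fun n => |g n * u n|) atTop (nhds |c|) := hc.abs
        have hpos : 0 < |c| := abs_pos.2 hne
        have hfreq : ∃ᶠ n : ℕ in atTop, ((n:ℝ)+1) * u n < |c| / (2*(CA+1)) :=
          freq_small u hunn husum (by positivity)
        have hfreq2 : ∃ᶠ n : ℕ in atTop, |g n * u n| < |c|/2 := by
          apply hfreq.mono
          intro n hn
          rw [abs_mul, abs_of_nonneg (hunn n)]
          have h1 : |g n| * u n ≤ (CA * ((n:ℝ)+1)) * u n :=
            mul_le_mul_of_nonneg_right (hCA n) (hunn n)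
          have h2 : (CA * ((n:ℝ)+1)) * u n ≤ (CA+1) * (((n:ℝ)+1) * u n) := by
            nlinarith [mul_nonneg (by positivity : (0:ℝ) ≤ (n:ℝ)+1) (hunn n)]
          have h3 : (CA+1) * (((n:ℝ)+1) * u n) < (CA+1) * (|c|/(2*(CA+1))) := by
            apply mul_lt_mul_of_pos_left hn (by positivity)
          have h4 : (CA+1) * (|c|/(2*(CA+1))) = |c|/2 := by
            field_simp
          linarith
        have := le_of_freq_le habs hfreq2
        linarith
      exact ⟨hgM1, hgM2, hAIPsum, hc0 ▸ hc⟩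
    · -- case (B)
      obtain ⟨N, hN_def⟩ : ∃ N : ℕ, N = max N0 1 := ⟨_, rfl⟩
      have hN1 : 1 ≤ N := by rw [hN_def]; exact le_max_right _ _
      have hN0N : N0 ≤ N := by rw [hN_def]; exact le_max_left _ _
      have hNprop : ∀ i, N ≤ i → 0 ≤ g i ∧ g i ≤ g (i+1) :=
        fun i hi => hN0 i (le_trans hN0N hi)
      have hAIPIP : ∀ j : ℕ, AIP (N + j) = IP (N + j) := by
        intro j
        simp only [hAIP_def, hIP_def]
        apply intervalIntegral.integral_congr
        intro s _
        dsimp only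
        rw [abs_of_nonneg (hNprop (N+j) (Nat.le_add_right N j)).1]
        ring
      have hgMnn1 : ∀ j : ℕ, 0 ≤ g (N + j) * M (N + j) t1 := fun j =>
        mul_nonneg (hNprop _ (Nat.le_add_right N j)).1 (hMnn _ t1 (left_mem_Icc.2 ht1t2))
      have hgMnn2 : ∀ j : ℕ, 0 ≤ g (N + j) * M (N + j) t2 := fun j =>
        mul_nonneg (hNprop _ (Nat.le_add_right N j)).1 (hMnn _ t2 (right_mem_Icc.2 ht1t2))
      have hshift1 := shift_summable hgMs1 N
      have hbound : ∀ n : ℕ, ∑ j ∈ Finset.range (n+1), AIP (N + j)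
          ≤ g N * u (N-1) + (∑' i, |g (i+1) - g i| * u i)
            + ∑' j, g (N+j) * M (N+j) t1 := by
        intro n
        have e2 : ∀ j : ℕ, AIP (N+j) = (g (N+j) * u (N+j-1) - g (N+j) * u (N+j))
            - g (N+j) * M (N+j) t2 + g (N+j) * M (N+j) t1 := by
          intro j
          rw [hAIPIP j]
          have := hsingle (N+j) (le_trans hN1 (Nat.le_add_right N j))
          linarith
        rw [Finset.sum_congr rfl (fun j _ => e2 j), Finset.sum_add_distrib,
          Finset.sum_sub_distrib]
        have h1 := tele_aux g u N n
        have h2 : ∑ j ∈ Finset.range n, (g (N+j+1) - g (N+j)) * u (N+j)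
            ≤ ∑' i, |g (i+1) - g i| * u i := by
          refine le_trans (Finset.sum_le_sum (fun j _ => ?_))
            (shift_sum_le_tsum (fun i => mul_nonneg (abs_nonneg _) (hunn i)) hΔuSum N n)
          exact mul_le_mul_of_nonneg_right (le_abs_self _) (hunn (N+j))
        have h3 : 0 ≤ ∑ j ∈ Finset.range (n+1), g (N+j) * M (N+j) t2 :=
          Finset.sum_nonneg (fun j _ => hgMnn2 j)
        have h4 : 0 ≤ g (N+n) * u (N+n) :=
          mul_nonneg (hNprop _ (Nat.le_add_right N n)).1 (hunn _)
        have h5 : ∑ j ∈ Finset.range (n+1), g (N+j) * M (N+j) t1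
            ≤ ∑' j, g (N+j) * M (N+j) t1 :=
          Summable.sum_le_tsum _ (fun j _ => hgMnn1 j) hshift1
        linarith [h1, h2, h3, h4, h5]
      have hbound' : ∀ n : ℕ, ∑ j ∈ Finset.range n, AIP (N+j)
          ≤ g N * u (N-1) + (∑' i, |g (i+1) - g i| * u i)
            + ∑' j, g (N+j) * M (N+j) t1 := by
        intro n
        refine le_trans ?_ (hbound n)
        apply Finset.sum_le_sum_of_subset_of_nonneg
          (Finset.range_subset_range.2 (Nat.le_succ n))
        intro j _ _
        exact hAIPnn _
      have hAIPsum : Summable AIP := by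
        have hsh : Summable (fun j => AIP (N + j)) :=
          summable_of_sum_range_le (fun j => hAIPnn _) hbound'
        have h6 : Summable (fun j => AIP (j + N)) := hsh.congr (fun j => by rw [Nat.add_comm])
        exact (summable_nat_add_iff N).1 h6
      obtain ⟨c, hc⟩ := hconv hgMs1 hgMs2 hAIPsum
      have hcnn : 0 ≤ c := by
        apply ge_of_tendsto hc
        filter_upwards [eventually_ge_atTop N] with n hn
        exact mul_nonneg (hNprop n hn).1 (hunn n)
      have hc_le : ∀ ε : ℝ, 0 < ε → c ≤ ε := by
        intro ε hε
        by_cases hz : ∀ n1 : ℕ, ∃ n, n1 ≤ n ∧ u n = 0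
        · apply le_of_freq_le hc
          rw [Filter.frequently_atTop]
          intro a
          obtain ⟨n, hn1, hn0⟩ := hz a
          exact ⟨n, hn1, by rw [hn0, mul_zero]; exact hε⟩
        · push_neg at hz
          obtain ⟨n2, hn2⟩ := hz
          have htails : Tendsto (fun i => ∑' j, |g ((j+i)+1) - g (j+i)| * u (j+i))
              atTop (nhds 0) := tendsto_sum_nat_add (fun i => |g (i+1) - g i| * u i)
          have hev : ∀ᶠ i : ℕ in atTop,
              (∑' j, |g ((j+i)+1) - g (j+i)| * u (j+i)) < ε/2 :=
            htails.eventually_lt_const (half_pos hε)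
          obtain ⟨N1, hN1t⟩ := Filter.eventually_atTop.1 hev
          obtain ⟨N2, hN2_def⟩ : ∃ N2 : ℕ, N2 = max (max N n2) N1 := ⟨_, rfl⟩
          have hNN2 : N ≤ N2 := by
            rw [hN2_def]; exact le_trans (le_max_left _ _) (le_max_left _ _)
          have hn2N2 : n2 ≤ N2 := by
            rw [hN2_def]; exact le_trans (le_max_right _ _) (le_max_left _ _)
          have hN1N2 : N1 ≤ N2 := by rw [hN2_def]; exact le_max_right _ _
          have hN2tail : (∑' j, |g ((j+N2)+1) - g (j+N2)| * u (j+N2)) < ε/2 :=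
            hN1t N2 hN1N2
          have hupos : ∀ n, N2 ≤ n → 0 < u n := by
            intro n hn
            rcases (hunn n).lt_or_eq with h | h
            · exact h
            · exact absurd h.symm (hn2 n (le_trans hn2N2 hn))
          apply le_of_freq_le hc
          rw [Filter.frequently_atTop]
          intro a
          have hguev : ∀ᶠ n : ℕ in atTop, g N2 * u n < ε/2 := by
            have hgu : Tendsto (fun n => g N2 * u n) atTop (nhds (g N2 * 0)) :=
              hu0.const_mul (g N2)
            rw [mul_zero] at hgu
            exact hgu.eventually_lt_const (half_pos hε)
          obtain ⟨n3, hn3⟩ := Filter.eventually_atTop.1 hguev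
          obtain ⟨n, hn_ge, hnN2, hmin⟩ := exists_min_tail u hu0 N2 hupos (max a n3)
          refine ⟨n, le_trans (le_max_left _ _) hn_ge, ?_⟩
          have htel : g n = g N2 + ∑ i ∈ Finset.Ico N2 n, (g (i+1) - g i) := by
            rw [Finset.sum_Ico_eq_sub _ hnN2, Finset.sum_range_sub, Finset.sum_range_sub]
            ring
          have hsumle : (∑ i ∈ Finset.Ico N2 n, (g (i+1) - g i)) * u n
              ≤ ∑ i ∈ Finset.Ico N2 n, (g (i+1) - g i) * u i := by
            rw [Finset.sum_mul]
            apply Finset.sum_le_sum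
            intro i hi
            obtain ⟨hiN, hin⟩ := Finset.mem_Ico.1 hi
            have hΔnn : 0 ≤ g (i+1) - g i := by
              have := (hNprop i (le_trans hNN2 hiN)).2
              linarith
            exact mul_le_mul_of_nonneg_left (hmin i hiN hin.le) hΔnn
          have h2 : ∑ i ∈ Finset.Ico N2 n, (g (i+1) - g i) * u i
              ≤ ∑' j, |g ((j+N2)+1) - g (j+N2)| * u (j+N2) := by
            rw [Finset.sum_Ico_eq_sum_range]
            have hsum' : Summable (fun j => |g ((j+N2)+1) - g (j+N2)| * u (j+N2)) :=
              (summable_nat_add_iff N2).2 hΔuSum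
            refine le_trans (Finset.sum_le_sum (fun j _ => ?_))
              (Summable.sum_le_tsum _ (fun j _ => mul_nonneg (abs_nonneg _) (hunn _)) hsum')
            rw [Nat.add_comm N2 j]
            exact mul_le_mul_of_nonneg_right (le_abs_self _) (hunn _)
          have hn3' : g N2 * u n < ε/2 := hn3 n (le_trans (le_max_right _ _) hn_ge)
          calc g n * u n = g N2 * u n + (∑ i ∈ Finset.Ico N2 n, (g (i+1) - g i)) * u n := by
                rw [htel]; ring
            _ ≤ g N2 * u n + ∑' j, |g ((j+N2)+1) - g (j+N2)| * u (j+N2) := by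
                linarith [hsumle.trans h2]
            _ < ε/2 + ε/2 := by linarith [hn3', hN2tail]
            _ = ε := by ring
      have hc0 : c = 0 := by
        refine le_antisymm ?_ hcnn
        by_contra hcc
        push_neg at hcc
        have := hc_le (c/2) (by linarith)
        linarith
      exact ⟨hgMs1, hgMs2, hAIPsum, hc0 ▸ hc⟩
  obtain ⟨hgM1, hgM2, hAIPsum, hc0⟩ := hkey
  have hIPsum : Summable IP := hIPsum_of hAIPsum
  have hS1 : Summable (fun j => g (m+j) * M (m+j) t1) := shift_summable hgM1 m
  have hS2 : Summable (fun j => g (m+j) * M (m+j) t2) := shift_summable hgM2 m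
  have hSIP : Summable (fun j => IP (m+j)) := shift_summable hIPsum m
  have hSAIP : Summable (fun j => AIP (m+j)) := shift_summable hAIPsum m
  have hSdu : Summable (fun j => (g (m+j+1) - g (m+j)) * u (m+j)) :=
    shift_summable hΔuSum' m
  have hSduAbs : Summable (fun j => |g (m+j+1) - g (m+j)| * u (m+j)) :=
    shift_summable hΔuSum m
  have hIocIcc : Ioc t1 t2 ⊆ Icc (0:ℝ) t2 := fun s hs => hsubI (Ioc_subset_Icc_self hs)
  have hIocI : Ioc t1 t2 ⊆ Icc t1 t2 := Ioc_subset_Icc_self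
  -- swap integral and sum for the (p+q) term
  have hPswap : (∫ s in t1..t2, ∑' j : ℕ, g (m+j) * (p (m+j) + q (m+j)) * M (m+j) s)
      = ∑' j : ℕ, IP (m+j) := by
    rw [intervalIntegral.integral_of_le ht1t2]
    have hcont : ∀ j : ℕ, ContinuousOn
        (fun s => g (m+j) * (p (m+j) + q (m+j)) * M (m+j) s) (Icc 0 t2) :=
      fun j => continuousOn_const.mul (hMC (m+j))
    have hmeas : ∀ j : ℕ, AEStronglyMeasurable
        (fun s => g (m+j) * (p (m+j) + q (m+j)) * M (m+j) s)
        (volume.restrict (Ioc t1 t2)) :=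
      fun j => ((hcont j).mono hIocIcc).aestronglyMeasurable measurableSet_Ioc
    have hInt : ∀ j : ℕ, IntegrableOn
        (fun s => g (m+j) * (p (m+j) + q (m+j)) * M (m+j) s) (Ioc t1 t2) volume :=
      fun j => (intervalIntegrable_iff_integrableOn_Ioc_of_le ht1t2).1 (hII _ (hcont j)).2.2
    have hlin : ∀ j : ℕ,
        (∫⁻ s in Ioc t1 t2, ‖g (m+j) * (p (m+j) + q (m+j)) * M (m+j) s‖ₑ)
        = ENNReal.ofReal (AIP (m+j)) := by
      intro j
      rw [← MeasureTheory.ofReal_integral_norm_eq_lintegral_enorm (hInt j)]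
      congr 1
      rw [hAIP_def]
      dsimp only
      rw [intervalIntegral.integral_of_le ht1t2]
      apply MeasureTheory.setIntegral_congr_fun measurableSet_Ioc
      intro s hs
      have hsI : s ∈ Icc t1 t2 := hIocI hs
      simp only [Real.norm_eq_abs]
      rw [abs_mul, abs_mul,
        abs_of_nonneg (add_nonneg (hp (m+j)) (hq (m+j))),
        abs_of_nonneg (hMnn (m+j) s hsI), mul_assoc]
    rw [MeasureTheory.integral_tsum hmeas (by
      rw [tsum_congr hlin, ← ENNReal.ofReal_tsum_of_nonneg (fun j => hAIPnn _) hSAIP]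
      exact ENNReal.ofReal_ne_top)]
    apply tsum_congr
    intro j
    rw [hIP_def]
    dsimp only
    rw [intervalIntegral.integral_of_le ht1t2]
  -- swap integral and sum for the flux term
  have hDswap : (∫ s in t1..t2,
        ∑' j : ℕ, (g (m+j+1) - g (m+j)) * x s * k (m+j) * M (m+j) s)
      = ∑' j : ℕ, (g (m+j+1) - g (m+j)) * u (m+j) := by
    rw [intervalIntegral.integral_of_le ht1t2]
    have hcont : ∀ j : ℕ, ContinuousOn
        (fun s => (g (m+j+1) - g (m+j)) * x s * k (m+j) * M (m+j) s) (Icc 0 t2) :=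
      fun j => (((continuousOn_const.mul hxC).mul continuousOn_const).mul (hMC (m+j)))
    have hmeas : ∀ j : ℕ, AEStronglyMeasurable
        (fun s => (g (m+j+1) - g (m+j)) * x s * k (m+j) * M (m+j) s)
        (volume.restrict (Ioc t1 t2)) :=
      fun j => ((hcont j).mono hIocIcc).aestronglyMeasurable measurableSet_Ioc
    have hInt : ∀ j : ℕ, IntegrableOn
        (fun s => (g (m+j+1) - g (m+j)) * x s * k (m+j) * M (m+j) s)
        (Ioc t1 t2) volume :=
      fun j => (intervalIntegrable_iff_integrableOn_Ioc_of_le ht1t2).1 (hII _ (hcont j)).2.2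
    have hval : ∀ j : ℕ, (∫ s in Ioc t1 t2,
        (g (m+j+1) - g (m+j)) * x s * k (m+j) * M (m+j) s)
        = (g (m+j+1) - g (m+j)) * u (m+j) := by
      intro j
      rw [hu_def]
      dsimp only
      rw [intervalIntegral.integral_of_le ht1t2, ← MeasureTheory.integral_const_mul]
      apply MeasureTheory.setIntegral_congr_fun measurableSet_Ioc
      intro s _
      ring
    have hlin : ∀ j : ℕ,
        (∫⁻ s in Ioc t1 t2, ‖(g (m+j+1) - g (m+j)) * x s * k (m+j) * M (m+j) s‖ₑ)
        = ENNReal.ofReal (|g (m+j+1) - g (m+j)| * u (m+j)) := by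
      intro j
      rw [← MeasureTheory.ofReal_integral_norm_eq_lintegral_enorm (hInt j)]
      congr 1
      rw [hu_def]
      dsimp only
      rw [intervalIntegral.integral_of_le ht1t2, ← MeasureTheory.integral_const_mul]
      apply MeasureTheory.setIntegral_congr_fun measurableSet_Ioc
      intro s hs
      have hsI : s ∈ Icc t1 t2 := hIocI hs
      simp only [Real.norm_eq_abs]
      rw [abs_mul, abs_mul, abs_mul,
        abs_of_nonneg (hxnn s hsI), abs_of_nonneg (hk (m+j)),
        abs_of_nonneg (hMnn (m+j) s hsI)]
      ring
    rw [MeasureTheory.integral_tsum hmeas (by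
      rw [tsum_congr hlin, ← ENNReal.ofReal_tsum_of_nonneg
        (fun j => mul_nonneg (abs_nonneg _) (hunn _)) hSduAbs]
      exact ENNReal.ofReal_ne_top)]
    exact tsum_congr hval
  -- first RHS term
  have hRfirst : (∫ s in t1..t2, g m * x s * k (m-1) * M (m-1) s) = g m * u (m-1) := by
    rw [hu_def]
    dsimp only
    rw [← intervalIntegral.integral_const_mul]
    apply intervalIntegral.integral_congr
    intro s _
    dsimp only
    ring
  -- evaluate the telescoping series
  have hterm : ∀ j : ℕ, g (m+j) * M (m+j) t2 - g (m+j) * M (m+j) t1 + IP (m+j)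
      = g (m+j) * u (m+j-1) - g (m+j) * u (m+j) :=
    fun j => hsingle (m+j) (le_trans hm (Nat.le_add_right m j))
  have hGsum : Summable (fun j => g (m+j) * u (m+j-1) - g (m+j) * u (m+j)) :=
    hGsum_of m hm hgM1 hgM2 hIPsum
  have hL : (∑' j : ℕ, (g (m+j) * u (m+j-1) - g (m+j) * u (m+j)))
      = g m * u (m-1) + ∑' j : ℕ, (g (m+j+1) - g (m+j)) * u (m+j) := by
    have hT1 : Tendsto (fun n => ∑ j ∈ Finset.range (n+1),
        (g (m+j) * u (m+j-1) - g (m+j) * u (m+j))) atTop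
        (nhds (∑' j, (g (m+j) * u (m+j-1) - g (m+j) * u (m+j)))) :=
      (tendsto_add_atTop_iff_nat 1).2 hGsum.hasSum.tendsto_sum_nat
    have htail0 : Tendsto (fun n => g (m+n) * u (m+n)) atTop (nhds 0) := by
      have h7 := hc0.comp (tendsto_add_atTop_nat m)
      exact h7.congr (fun n => by
        show g (n+m) * u (n+m) = g (m+n) * u (m+n)
        rw [Nat.add_comm])
    have hT2 : Tendsto (fun n => g m * u (m-1)
        + (∑ j ∈ Finset.range n, (g (m+j+1) - g (m+j)) * u (m+j))
        - g (m+n) * u (m+n)) atTop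
        (nhds (g m * u (m-1) + (∑' j, (g (m+j+1) - g (m+j)) * u (m+j)) - 0)) :=
      (tendsto_const_nhds.add hSdu.hasSum.tendsto_sum_nat).sub htail0
    have h8 := tendsto_nhds_unique hT1 (hT2.congr (fun n => (tele_aux g u m n).symm))
    rw [h8, sub_zero]
  have hLHS : (∑' i : ℕ, g (m+i) * M (m+i) t2) - (∑' i : ℕ, g (m+i) * M (m+i) t1)
      + (∑' j : ℕ, IP (m+j))
      = g m * u (m-1) + ∑' j : ℕ, (g (m+j+1) - g (m+j)) * u (m+j) := by
    rw [← Summable.tsum_sub hS2 hS1, ← Summable.tsum_add (hS2.sub hS1) hSIP, tsum_congr hterm, hL]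
  rw [hPswap, hDswap, hRfirst]
  exact hLHS
end
end

section
/- Every solution y of the silicosis system on [0,T) satisfies the mass balance identity 𝒰(y(t)) − 𝒰(y(0)) = (r+α)t − ∫_0^t Σ_{i≥0}(p_i+q_i)M_i(s) ds − ∫_0^t Σ_{i≥1} i p_i M_i(s) ds for all t ∈ [0,T), where 𝒰(y) = x + Σ_{i≥0}(i+1)M_i. -/
open MeasureTheory Set Filter Topology

set_option maxHeartbeats 1000000

noncomputable section

private lemma seq_limit_aux {a c d : ℕ → ℝ}
    (ha0 : ∀ i, 0 ≤ a i) (hc0 : ∀ i, 0 ≤ c i)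
    (hrec : ∀ j : ℕ, a (j + 1) = a j - c (j + 1) - d (j + 1))
    (hasumm : Summable a)
    (hdsumm : Summable (fun i : ℕ => ((i : ℝ) + 1) * |d i|)) :
    Tendsto (fun N : ℕ => ((N : ℝ) + 1) * a N) atTop (𝓝 0) := by
  have hd1 : Summable (fun i : ℕ => |d i|) := by
    refine hdsumm.of_nonneg_of_le (fun i => abs_nonneg _) (fun i => ?_)
    exact le_mul_of_one_le_left (abs_nonneg _) (le_add_of_nonneg_left (Nat.cast_nonneg i))
  have key1 : ∀ j N : ℕ, j ≤ N → a N ≤ a j + ∑ m ∈ Finset.Ioc j N, |d m| := by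
    intro j N h
    induction N, h using Nat.le_induction with
    | base => simp
    | succ N hjN ih =>
      rw [Finset.sum_Ioc_succ_top hjN]
      have h1 := neg_le_abs (d (N + 1))
      have h2 := hc0 (N + 1)
      have h3 := hrec N
      linarith
  have key2 : ∀ j N : ℕ, j ≤ N → a N ≤ a j + ∑' m : ℕ, |d (m + (j + 1))| := by
    intro j N h
    refine (key1 j N h).trans (add_le_add_right ?_ _)
    have hsum : Summable (fun m : ℕ => |d (m + (j + 1))|) := (summable_nat_add_iff (j + 1)).2 hd1
    have hIoc : Finset.Ioc j N = Finset.Ico (j + 1) (N + 1) := by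
      rw [Finset.Ico_add_one_right_eq_Icc, Finset.Icc_add_one_left_eq_Ioc]
    rw [hIoc, Finset.sum_Ico_eq_sum_range]
    calc ∑ l ∈ Finset.range (N + 1 - (j + 1)), |d (j + 1 + l)|
        = ∑ l ∈ Finset.range (N + 1 - (j + 1)), |d (l + (j + 1))| :=
          Finset.sum_congr rfl (fun l _ => by rw [add_comm (j + 1) l])
      _ ≤ ∑' m : ℕ, |d (m + (j + 1))| := Summable.sum_le_tsum _ (fun _ _ => abs_nonneg _) hsum
  set tA : ℕ → ℝ := fun K => ∑' l : ℕ, a (l + K) with htAdef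
  set tD : ℕ → ℝ := fun K => ∑' l : ℕ, (((l + K : ℕ) : ℝ) + 1) * |d (l + K)| with htDdef
  have htA_nonneg : ∀ K, 0 ≤ tA K := fun K => tsum_nonneg (fun l => ha0 _)
  have htD_nonneg : ∀ K, 0 ≤ tD K :=
    fun K => tsum_nonneg (fun l => mul_nonneg (by positivity) (abs_nonneg _))
  have key3 : ∀ N j : ℕ, N / 2 ≤ j →
      ((N : ℝ) + 1) * ∑' m : ℕ, |d (m + (j + 1))| ≤ 2 * tD (N / 2 + 1) := by
    intro N j hj
    rw [← tsum_mul_left, htDdef]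
    simp only
    rw [← tsum_mul_left]
    refine Summable.tsum_le_tsum_of_inj (fun m => m + (j - N / 2)) (add_left_injective _)
      (fun c _ => mul_nonneg (by norm_num) (mul_nonneg (by positivity) (abs_nonneg _)))
      (fun m => ?_)
      (((summable_nat_add_iff (j + 1)).2 hd1).mul_left _)
      (((summable_nat_add_iff (N / 2 + 1)).2 hdsumm).mul_left 2)
    have hidx : m + (j - N / 2) + (N / 2 + 1) = m + (j + 1) := by omega
    rw [hidx]
    have hcast : (N : ℝ) ≤ 2 * (j : ℝ) + 1 := by exact_mod_cast (by omega : N ≤ 2 * j + 1)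
    have habs := abs_nonneg (d (m + (j + 1)))
    have hm : (0:ℝ) ≤ (m : ℝ) := Nat.cast_nonneg m
    have hcast2 : ((m + (j + 1) : ℕ) : ℝ) = (m : ℝ) + (j : ℝ) + 1 := by push_cast; ring
    rw [hcast2]
    nlinarith
  have main : ∀ N : ℕ, ((N : ℝ) + 1) * a N ≤ 2 * tA (N / 2) + 2 * tD (N / 2 + 1) := by
    intro N
    have hKN : N / 2 ≤ N := Nat.div_le_self N 2
    have hcard : (Finset.Ico (N / 2) (N + 1)).card = N + 1 - N / 2 := Nat.card_Ico _ _
    have hsum : ∀ j ∈ Finset.Ico (N / 2) (N + 1),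
        ((N : ℝ) + 1) * a N ≤ ((N : ℝ) + 1) * a j + 2 * tD (N / 2 + 1) := by
      intro j hj
      obtain ⟨hj1, hj2⟩ := Finset.mem_Ico.1 hj
      have h2 := key2 j N (by omega)
      have h3 := key3 N j hj1
      have hN1 : (0:ℝ) ≤ (N : ℝ) + 1 := by positivity
      nlinarith [mul_le_mul_of_nonneg_left h2 hN1]
    have hsums := Finset.sum_le_sum hsum
    rw [Finset.sum_const, hcard, nsmul_eq_mul] at hsums
    rw [Finset.sum_add_distrib, Finset.sum_const, hcard, nsmul_eq_mul, ← Finset.mul_sum] at hsums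
    have hJA : ∑ j ∈ Finset.Ico (N / 2) (N + 1), a j ≤ tA (N / 2) := by
      rw [Finset.sum_Ico_eq_sum_range]
      calc ∑ l ∈ Finset.range (N + 1 - N / 2), a (N / 2 + l)
          = ∑ l ∈ Finset.range (N + 1 - N / 2), a (l + N / 2) :=
            Finset.sum_congr rfl (fun l _ => by rw [add_comm])
        _ ≤ tA (N / 2) := Summable.sum_le_tsum _ (fun _ _ => ha0 _) ((summable_nat_add_iff (N / 2)).2 hasumm)
    have h2c : ((N : ℝ) + 1) ≤ 2 * ((N + 1 - N / 2 : ℕ) : ℝ) := by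
      have h := (by omega : N + 1 ≤ 2 * (N + 1 - N / 2))
      calc ((N : ℝ) + 1) = ((N + 1 : ℕ) : ℝ) := by push_cast; ring
        _ ≤ ((2 * (N + 1 - N / 2) : ℕ) : ℝ) := by exact_mod_cast h
        _ = 2 * ((N + 1 - N / 2 : ℕ) : ℝ) := by push_cast; ring
    have hcpos : (0:ℝ) < ((N + 1 - N / 2 : ℕ) : ℝ) := by
      exact_mod_cast (by omega : 0 < N + 1 - N / 2)
    have hfin : ((N + 1 - N / 2 : ℕ) : ℝ) * (((N : ℝ) + 1) * a N)
        ≤ ((N + 1 - N / 2 : ℕ) : ℝ) * (2 * tA (N / 2) + 2 * tD (N / 2 + 1)) := by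
      nlinarith [htA_nonneg (N / 2), htD_nonneg (N / 2 + 1), hJA,
        mul_le_mul_of_nonneg_left hJA (by positivity : (0:ℝ) ≤ (N : ℝ) + 1)]
    exact le_of_mul_le_mul_left hfin hcpos
  have hdiv2 : Tendsto (fun N : ℕ => N / 2) atTop atTop := by
    apply Filter.tendsto_atTop_atTop.2
    intro b
    exact ⟨2 * b, fun a ha => by omega⟩
  have htAlim : Tendsto (fun N => tA (N / 2)) atTop (𝓝 0) := (tendsto_sum_nat_add a).comp hdiv2
  have htDlim : Tendsto (fun N => tD (N / 2 + 1)) atTop (𝓝 0) :=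
    (tendsto_sum_nat_add (fun i : ℕ => ((i : ℝ) + 1) * |d i|)).comp
      ((tendsto_add_atTop_nat 1).comp hdiv2)
  have hupper : Tendsto (fun N => 2 * tA (N / 2) + 2 * tD (N / 2 + 1)) atTop (𝓝 0) := by
    have := (htAlim.const_mul 2).add (htDlim.const_mul 2)
    simpa using this
  exact tendsto_of_tendsto_of_tendsto_of_le_of_le tendsto_const_nhds hupper
    (fun N => mul_nonneg (by positivity) (ha0 N)) main


/-- The total amount of matter `𝒰(y(t)) = x(t) + ∑_{i≥0} (i+1) Mᵢ(t)`. -/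
def Utot (x : ℝ → ℝ) (M : ℕ → ℝ → ℝ) (t : ℝ) : ℝ :=
  x t + ∑' i : ℕ, ((i : ℝ) + 1) * M i t

/-- the mass balance identity (5.5): for every solution on `[0,T)` and
every `t ∈ [0,T)`,
`𝒰(y(t)) − 𝒰(y(0)) = (r+α)t − ∫₀ᵗ ∑_{i≥0}(pᵢ+qᵢ)Mᵢ − ∫₀ᵗ ∑_{i≥1} i pᵢ Mᵢ`. -/
theorem silicosis_mass_balance
    (k p q : ℕ → ℝ)
    (hk : ∀ i, 0 ≤ k i) (hp : ∀ i, 0 ≤ p i) (hq : ∀ i, 0 ≤ q i)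
    (r α : ℝ) (hr : 0 ≤ r) (hα : 0 ≤ α)
    (T : ℝ) (x : ℝ → ℝ) (M : ℕ → ℝ → ℝ)
    (hsol : IsSol k p q r α (Set.Ico 0 T) x M) :
    ∀ t ∈ Set.Ico (0:ℝ) T,
      Utot x M t - Utot x M 0
        = (r + α) * t - (∫ s in (0:ℝ)..t, ∑' i : ℕ, (p i + q i) * M i s)
          - ∫ s in (0:ℝ)..t, ∑' i : ℕ, (i : ℝ) * p i * M i s := by
  intro t ht
  have ht0 : (0:ℝ) ≤ t := ht.1
  have h0D : (0:ℝ) ∈ Set.Ico (0:ℝ) T := ⟨le_refl 0, lt_of_le_of_lt ht0 ht.2⟩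
  have htmem : t ∈ Icc (0:ℝ) t := right_mem_Icc.2 ht0
  have h0mem : (0:ℝ) ∈ Icc (0:ℝ) t := left_mem_Icc.2 ht0
  have hsub : Icc (0:ℝ) t ⊆ Ico (0:ℝ) T := fun s hs => ⟨hs.1, lt_of_le_of_lt hs.2 ht.2⟩
  have hIoc : Ioc (0:ℝ) t ⊆ Icc (0:ℝ) t := Ioc_subset_Icc_self
  -- continuity and basic integrability
  have hxC : ContinuousOn x (Icc (0:ℝ) t) := hsol.x_cont.mono hsub
  have hMC : ∀ i, ContinuousOn (M i) (Icc (0:ℝ) t) := fun i => (hsol.M_cont i).mono hsub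
  have hcont_int : ∀ {f : ℝ → ℝ}, ContinuousOn f (Icc (0:ℝ) t) →
      IntegrableOn f (Ioc (0:ℝ) t) volume :=
    fun hf => hf.integrableOn_Icc.mono_set hIoc
  have hbC : ∀ i, ContinuousOn (fun s => k i * x s * M i s) (Icc (0:ℝ) t) :=
    fun i => (continuousOn_const.mul hxC).mul (hMC i)
  have hbInt : ∀ i, IntegrableOn (fun s => k i * x s * M i s) (Ioc (0:ℝ) t) volume :=
    fun i => hcont_int (hbC i)
  have hcC : ∀ i, ContinuousOn (fun s => (p i + q i) * M i s) (Icc (0:ℝ) t) :=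
    fun i => continuousOn_const.mul (hMC i)
  have hcInt : ∀ i, IntegrableOn (fun s => (p i + q i) * M i s) (Ioc (0:ℝ) t) volume :=
    fun i => hcont_int (hcC i)
  -- nonnegativity
  have hxpos : ∀ s ∈ Icc (0:ℝ) t, 0 ≤ x s := fun s hs => hsol.x_nonneg s (hsub hs)
  have hMpos : ∀ (i : ℕ), ∀ s ∈ Icc (0:ℝ) t, 0 ≤ M i s := fun i s hs => hsol.M_nonneg i s (hsub hs)
  have hb_nonneg : ∀ (i : ℕ), ∀ s ∈ Icc (0:ℝ) t, 0 ≤ k i * x s * M i s :=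
    fun i s hs => mul_nonneg (mul_nonneg (hk i) (hxpos s hs)) (hMpos i s hs)
  -- summabilities
  have hSg : ∀ s ∈ Icc (0:ℝ) t,
      Summable (fun i : ℕ => ((i:ℝ) * p i + (i:ℝ) * q i + k i) * M i s) :=
    fun s hs => hsol.summable_mom s (hsub hs)
  have hcoef : ∀ i : ℕ, 0 ≤ (i:ℝ) * p i + (i:ℝ) * q i + k i := fun i =>
    add_nonneg (add_nonneg (mul_nonneg (Nat.cast_nonneg i) (hp i))
      (mul_nonneg (Nat.cast_nonneg i) (hq i))) (hk i)
  have hg_nonneg : ∀ (i : ℕ), ∀ s ∈ Icc (0:ℝ) t,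
      0 ≤ ((i:ℝ) * p i + (i:ℝ) * q i + k i) * M i s :=
    fun i s hs => mul_nonneg (hcoef i) (hMpos i s hs)
  have hSkM : ∀ s ∈ Icc (0:ℝ) t, Summable (fun i : ℕ => k i * M i s) := by
    intro s hs
    refine (hSg s hs).of_nonneg_of_le (fun i => mul_nonneg (hk i) (hMpos i s hs)) (fun i => ?_)
    refine mul_le_mul_of_nonneg_right ?_ (hMpos i s hs)
    exact le_add_of_nonneg_left (add_nonneg (mul_nonneg (Nat.cast_nonneg i) (hp i))
      (mul_nonneg (Nat.cast_nonneg i) (hq i)))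
  have hSb : ∀ s ∈ Icc (0:ℝ) t, Summable (fun i : ℕ => k i * x s * M i s) :=
    fun s hs => (((hSkM s hs).mul_left (x s)).congr (fun i => by ring))
  have hSq : ∀ s ∈ Icc (0:ℝ) t, Summable (fun i : ℕ => (i:ℝ) * q i * M i s) := by
    intro s hs
    refine (hSg s hs).of_nonneg_of_le
      (fun i => mul_nonneg (mul_nonneg (Nat.cast_nonneg i) (hq i)) (hMpos i s hs)) (fun i => ?_)
    refine mul_le_mul_of_nonneg_right ?_ (hMpos i s hs)
    have := mul_nonneg (Nat.cast_nonneg (α := ℝ) i) (hp i)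
    have := hk i
    linarith
  have hSp : ∀ s ∈ Icc (0:ℝ) t, Summable (fun i : ℕ => (i:ℝ) * p i * M i s) := by
    intro s hs
    refine (hSg s hs).of_nonneg_of_le
      (fun i => mul_nonneg (mul_nonneg (Nat.cast_nonneg i) (hp i)) (hMpos i s hs)) (fun i => ?_)
    refine mul_le_mul_of_nonneg_right ?_ (hMpos i s hs)
    have := mul_nonneg (Nat.cast_nonneg (α := ℝ) i) (hq i)
    have := hk i
    linarith
  have hSN : ∀ s ∈ Icc (0:ℝ) t, Summable (fun i : ℕ => ((i:ℝ) + 1) * M i s) :=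
    fun s hs => hsol.summable_norm s (hsub hs)
  have hshift : ∀ s ∈ Icc (0:ℝ) t, ∀ n : ℕ,
      (((n + 1 : ℕ) : ℝ) + 1) * (p (n+1) + q (n+1)) * M (n+1) s
        ≤ 2 * ((((n + 1 : ℕ) : ℝ) * p (n+1) + ((n + 1 : ℕ) : ℝ) * q (n+1) + k (n+1)) * M (n+1) s) := by
    intro s hs n
    have hM := hMpos (n+1) s hs
    have hpp := hp (n+1)
    have hqq := hq (n+1)
    have hkk := hk (n+1)
    have hn : (0:ℝ) ≤ (n : ℝ) := Nat.cast_nonneg n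
    push_cast
    nlinarith [mul_nonneg (mul_nonneg hn (add_nonneg hpp hqq)) hM, mul_nonneg hkk hM,
      mul_nonneg (add_nonneg hpp hqq) hM]
  have hSP : ∀ s ∈ Icc (0:ℝ) t, Summable (fun i : ℕ => ((i:ℝ) + 1) * (p i + q i) * M i s) := by
    intro s hs
    have h1 : Summable (fun n : ℕ =>
        (((n + 1 : ℕ) : ℝ) + 1) * (p (n+1) + q (n+1)) * M (n+1) s) := by
      refine Summable.of_nonneg_of_le
        (fun n => mul_nonneg (mul_nonneg (by positivity) (add_nonneg (hp _) (hq _)))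
          (hMpos _ s hs))
        (hshift s hs) (((summable_nat_add_iff 1).2 (hSg s hs)).mul_left 2)
    exact (summable_nat_add_iff 1).1 h1
  have hSpq : ∀ s ∈ Icc (0:ℝ) t, Summable (fun i : ℕ => (p i + q i) * M i s) := by
    intro s hs
    refine (hSP s hs).of_nonneg_of_le
      (fun i => mul_nonneg (add_nonneg (hp i) (hq i)) (hMpos i s hs)) (fun i => ?_)
    nlinarith [mul_nonneg (mul_nonneg (Nat.cast_nonneg (α := ℝ) i) (add_nonneg (hp i) (hq i)))
      (hMpos i s hs)]
  -- measurability helper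
  have haesm : ∀ (F : ℕ → ℝ → ℝ), (∀ i, ContinuousOn (F i) (Icc (0:ℝ) t)) →
      (∀ s ∈ Ioc (0:ℝ) t, Summable (fun i => F i s)) →
      AEStronglyMeasurable (fun s => ∑' i, F i s) (volume.restrict (Ioc (0:ℝ) t)) := by
    intro F hF hFs
    refine aestronglyMeasurable_of_tendsto_ae atTop
      (f := fun n s => ∑ i ∈ Finset.range n, F i s) (fun n => ?_) ?_
    · have hc : ContinuousOn (fun s => ∑ i ∈ Finset.range n, F i s) (Icc (0:ℝ) t) :=
        continuousOn_finset_sum _ (fun i _ => hF i)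
      exact (hc.mono hIoc).aestronglyMeasurable measurableSet_Ioc
    · filter_upwards [ae_restrict_mem measurableSet_Ioc] with s hs
      exact (hFs s hs).hasSum.tendsto_sum_nat
  -- bound on x
  obtain ⟨C, hC⟩ := hsol.norm_bdd t hsub
  have hxle : ∀ s ∈ Icc (0:ℝ) t, x s ≤ C := by
    intro s hs
    have h1 := hC s hs
    have h2 : 0 ≤ ∑' i : ℕ, ((i:ℝ) + 1) * M i s :=
      tsum_nonneg (fun i => mul_nonneg (by positivity) (hMpos i s hs))
    linarith
  have hC0 : 0 ≤ C := le_trans (hxpos 0 h0mem) (hxle 0 h0mem)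
  -- integrability of the dominating function G
  have hGInt : IntegrableOn (fun s => ∑' i : ℕ, ((i:ℝ) * p i + (i:ℝ) * q i + k i) * M i s)
      (Ioc (0:ℝ) t) volume := by
    have h := hsol.mom_int t ht
    rwa [intervalIntegrable_iff_integrableOn_Ioc_of_le ht0] at h
  -- integrability of B
  have hB_nonneg : ∀ s ∈ Icc (0:ℝ) t, 0 ≤ ∑' i : ℕ, k i * x s * M i s :=
    fun s hs => tsum_nonneg (fun i => hb_nonneg i s hs)
  have hBle : ∀ s ∈ Icc (0:ℝ) t, (∑' i : ℕ, k i * x s * M i s)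
      ≤ C * ∑' i : ℕ, ((i:ℝ) * p i + (i:ℝ) * q i + k i) * M i s := by
    intro s hs
    rw [← tsum_mul_left]
    refine Summable.tsum_le_tsum (fun i => ?_) (hSb s hs) ((hSg s hs).mul_left C)
    have h1 := hMpos i s hs
    have h2 := hxpos s hs
    have h3 := hxle s hs
    have h4 := hk i
    have h5 : 0 ≤ (i:ℝ) * p i + (i:ℝ) * q i :=
      add_nonneg (mul_nonneg (Nat.cast_nonneg i) (hp i)) (mul_nonneg (Nat.cast_nonneg i) (hq i))
    nlinarith [mul_nonneg (mul_nonneg h4 (sub_nonneg.2 h3)) h1, mul_nonneg (mul_nonneg hC0 h5) h1]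
  have hBmeas : AEStronglyMeasurable (fun s => ∑' i : ℕ, k i * x s * M i s)
      (volume.restrict (Ioc (0:ℝ) t)) :=
    haesm _ hbC (fun s hs => hSb s (hIoc hs))
  have hBInt : IntegrableOn (fun s => ∑' i : ℕ, k i * x s * M i s) (Ioc (0:ℝ) t) volume := by
    refine Integrable.mono' (hGInt.const_mul C) hBmeas ?_
    filter_upwards [ae_restrict_mem measurableSet_Ioc] with s hs
    rw [Real.norm_eq_abs, abs_of_nonneg (hB_nonneg s (hIoc hs))]
    exact hBle s (hIoc hs)
  -- integrability of Q
  have hQ_nonneg : ∀ s ∈ Icc (0:ℝ) t, 0 ≤ ∑' i : ℕ, (i:ℝ) * q i * M i s :=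
    fun s hs => tsum_nonneg (fun i =>
      mul_nonneg (mul_nonneg (Nat.cast_nonneg i) (hq i)) (hMpos i s hs))
  have hQle : ∀ s ∈ Icc (0:ℝ) t, (∑' i : ℕ, (i:ℝ) * q i * M i s)
      ≤ ∑' i : ℕ, ((i:ℝ) * p i + (i:ℝ) * q i + k i) * M i s := by
    intro s hs
    refine Summable.tsum_le_tsum (fun i => ?_) (hSq s hs) (hSg s hs)
    refine mul_le_mul_of_nonneg_right ?_ (hMpos i s hs)
    have := mul_nonneg (Nat.cast_nonneg (α := ℝ) i) (hp i)
    have := hk i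
    linarith
  have hQmeas : AEStronglyMeasurable (fun s => ∑' i : ℕ, (i:ℝ) * q i * M i s)
      (volume.restrict (Ioc (0:ℝ) t)) :=
    haesm _ (fun i => continuousOn_const.mul (hMC i)) (fun s hs => hSq s (hIoc hs))
  have hQInt : IntegrableOn (fun s => ∑' i : ℕ, (i:ℝ) * q i * M i s) (Ioc (0:ℝ) t) volume := by
    refine Integrable.mono' hGInt hQmeas ?_
    filter_upwards [ae_restrict_mem measurableSet_Ioc] with s hs
    rw [Real.norm_eq_abs, abs_of_nonneg (hQ_nonneg s (hIoc hs))]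
    exact hQle s (hIoc hs)
  -- integrability of P
  have hP_nonneg : ∀ s ∈ Icc (0:ℝ) t, 0 ≤ ∑' i : ℕ, ((i:ℝ) + 1) * (p i + q i) * M i s :=
    fun s hs => tsum_nonneg (fun i =>
      mul_nonneg (mul_nonneg (by positivity) (add_nonneg (hp i) (hq i))) (hMpos i s hs))
  have hPle : ∀ s ∈ Icc (0:ℝ) t, (∑' i : ℕ, ((i:ℝ) + 1) * (p i + q i) * M i s)
      ≤ 2 * (∑' i : ℕ, ((i:ℝ) * p i + (i:ℝ) * q i + k i) * M i s) + (p 0 + q 0) * M 0 s := by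
    intro s hs
    rw [Summable.tsum_eq_zero_add (hSP s hs), Summable.tsum_eq_zero_add (hSg s hs)]
    have h3 : (∑' n : ℕ, (((n + 1 : ℕ) : ℝ) + 1) * (p (n+1) + q (n+1)) * M (n+1) s)
        ≤ ∑' n : ℕ, 2 * ((((n + 1 : ℕ) : ℝ) * p (n+1) + ((n + 1 : ℕ) : ℝ) * q (n+1) + k (n+1))
          * M (n+1) s) :=
      Summable.tsum_le_tsum (hshift s hs) ((summable_nat_add_iff 1).2 (hSP s hs))
        (((summable_nat_add_iff 1).2 (hSg s hs)).mul_left 2)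
    rw [tsum_mul_left] at h3
    have h4 : 0 ≤ ((0:ℕ):ℝ) * p 0 + ((0:ℕ):ℝ) * q 0 + k 0 := hcoef 0
    have h5 := hMpos 0 s hs
    have h6 := mul_nonneg h4 h5
    push_cast at h3 h6 ⊢
    nlinarith [h3, h6]
  have hPcC : ∀ i : ℕ, ContinuousOn (fun s => ((i:ℝ) + 1) * (p i + q i) * M i s)
      (Icc (0:ℝ) t) := fun i => continuousOn_const.mul (hMC i)
  have hPcInt : ∀ i : ℕ, IntegrableOn (fun s => ((i:ℝ) + 1) * (p i + q i) * M i s)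
      (Ioc (0:ℝ) t) volume := fun i => hcont_int (hPcC i)
  have hPmeas : AEStronglyMeasurable (fun s => ∑' i : ℕ, ((i:ℝ) + 1) * (p i + q i) * M i s)
      (volume.restrict (Ioc (0:ℝ) t)) :=
    haesm _ hPcC (fun s hs => hSP s (hIoc hs))
  have hPInt : IntegrableOn (fun s => ∑' i : ℕ, ((i:ℝ) + 1) * (p i + q i) * M i s)
      (Ioc (0:ℝ) t) volume := by
    have hbd : IntegrableOn (fun s => 2 * (∑' i : ℕ, ((i:ℝ) * p i + (i:ℝ) * q i + k i) * M i s)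
        + (p 0 + q 0) * M 0 s) (Ioc (0:ℝ) t) volume := (hGInt.const_mul 2).add (hcont_int (hcC 0))
    refine Integrable.mono' hbd hPmeas ?_
    filter_upwards [ae_restrict_mem measurableSet_Ioc] with s hs
    rw [Real.norm_eq_abs, abs_of_nonneg (hP_nonneg s (hIoc hs))]
    exact hPle s (hIoc hs)
  -- integrability of PQ1 and PQ2
  have hPQ1_nonneg : ∀ s ∈ Icc (0:ℝ) t, 0 ≤ ∑' i : ℕ, (p i + q i) * M i s :=
    fun s hs => tsum_nonneg (fun i => mul_nonneg (add_nonneg (hp i) (hq i)) (hMpos i s hs))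
  have hPQ1le : ∀ s ∈ Icc (0:ℝ) t, (∑' i : ℕ, (p i + q i) * M i s)
      ≤ ∑' i : ℕ, ((i:ℝ) + 1) * (p i + q i) * M i s := by
    intro s hs
    refine Summable.tsum_le_tsum (fun i => ?_) (hSpq s hs) (hSP s hs)
    nlinarith [mul_nonneg (mul_nonneg (Nat.cast_nonneg (α := ℝ) i) (add_nonneg (hp i) (hq i)))
      (hMpos i s hs)]
  have hPQ1meas : AEStronglyMeasurable (fun s => ∑' i : ℕ, (p i + q i) * M i s)
      (volume.restrict (Ioc (0:ℝ) t)) :=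
    haesm _ (fun i => continuousOn_const.mul (hMC i)) (fun s hs => hSpq s (hIoc hs))
  have hPQ1Int : IntegrableOn (fun s => ∑' i : ℕ, (p i + q i) * M i s) (Ioc (0:ℝ) t) volume := by
    refine Integrable.mono' hPInt hPQ1meas ?_
    filter_upwards [ae_restrict_mem measurableSet_Ioc] with s hs
    rw [Real.norm_eq_abs, abs_of_nonneg (hPQ1_nonneg s (hIoc hs))]
    exact hPQ1le s (hIoc hs)
  have hPQ2_nonneg : ∀ s ∈ Icc (0:ℝ) t, 0 ≤ ∑' i : ℕ, (i:ℝ) * p i * M i s :=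
    fun s hs => tsum_nonneg (fun i =>
      mul_nonneg (mul_nonneg (Nat.cast_nonneg i) (hp i)) (hMpos i s hs))
  have hPQ2le : ∀ s ∈ Icc (0:ℝ) t, (∑' i : ℕ, (i:ℝ) * p i * M i s)
      ≤ ∑' i : ℕ, ((i:ℝ) * p i + (i:ℝ) * q i + k i) * M i s := by
    intro s hs
    refine Summable.tsum_le_tsum (fun i => ?_) (hSp s hs) (hSg s hs)
    refine mul_le_mul_of_nonneg_right ?_ (hMpos i s hs)
    have := mul_nonneg (Nat.cast_nonneg (α := ℝ) i) (hq i)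
    have := hk i
    linarith
  have hPQ2meas : AEStronglyMeasurable (fun s => ∑' i : ℕ, (i:ℝ) * p i * M i s)
      (volume.restrict (Ioc (0:ℝ) t)) :=
    haesm _ (fun i => continuousOn_const.mul (hMC i)) (fun s hs => hSp s (hIoc hs))
  have hPQ2Int : IntegrableOn (fun s => ∑' i : ℕ, (i:ℝ) * p i * M i s) (Ioc (0:ℝ) t) volume := by
    refine Integrable.mono' hGInt hPQ2meas ?_
    filter_upwards [ae_restrict_mem measurableSet_Ioc] with s hs
    rw [Real.norm_eq_abs, abs_of_nonneg (hPQ2_nonneg s (hIoc hs))]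
    exact hPQ2le s (hIoc hs)
  -- the sequences a, c, d
  set a : ℕ → ℝ := fun i => ∫ s in Ioc (0:ℝ) t, k i * x s * M i s with hadef
  set c : ℕ → ℝ := fun i => ∫ s in Ioc (0:ℝ) t, (p i + q i) * M i s with hcdef
  set d : ℕ → ℝ := fun i => M i t - M i 0 with hddef
  have ha0 : ∀ i, 0 ≤ a i := fun i =>
    setIntegral_nonneg measurableSet_Ioc (fun s hs => hb_nonneg i s (hIoc hs))
  have hc0 : ∀ i, 0 ≤ c i := fun i =>
    setIntegral_nonneg measurableSet_Ioc (fun s hs =>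
      mul_nonneg (add_nonneg (hp i) (hq i)) (hMpos i s (hIoc hs)))
  -- converted equations
  have heq0 : M 0 t - M 0 0 = r * t - (a 0 + c 0) := by
    have h := hsol.eq_M0 t ht
    rw [intervalIntegral.integral_of_le ht0,
      MeasureTheory.integral_add (hbInt 0) (hcInt 0)] at h
    simp only [hadef, hcdef]
    linarith
  have heqM : ∀ j : ℕ, M (j+1) t - M (j+1) 0 = a j - a (j+1) - c (j+1) := by
    intro j
    have h := hsol.eq_M (j+1) (by omega) t ht
    simp only [Nat.add_sub_cancel] at h
    have hInt1 : IntegrableOn (fun s => k j * x s * M j s - k (j+1) * x s * M (j+1) s)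
        (Ioc (0:ℝ) t) volume := (hbInt j).sub (hbInt (j+1))
    rw [intervalIntegral.integral_of_le ht0,
      MeasureTheory.integral_sub hInt1 (hcInt (j+1)),
      MeasureTheory.integral_sub (hbInt j) (hbInt (j+1))] at h
    simp only [hadef, hcdef]
    linarith
  have hrec : ∀ j : ℕ, a (j+1) = a j - c (j+1) - d (j+1) := by
    intro j
    have h := heqM j
    simp only [hddef]
    linarith
  have heqx : x t - x 0 = α * t + ((∫ s in Ioc (0:ℝ) t, ∑' i : ℕ, (i:ℝ) * q i * M i s)
      - ∫ s in Ioc (0:ℝ) t, ∑' i : ℕ, k i * x s * M i s) := by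
    have h := hsol.eq_x t ht
    rw [intervalIntegral.integral_of_le ht0] at h
    have hcong : (∫ s in Ioc (0:ℝ) t,
          (-(x s * ∑' i : ℕ, k i * M i s) + ∑' i : ℕ, (i:ℝ) * q i * M i s))
        = ∫ s in Ioc (0:ℝ) t,
          ((∑' i : ℕ, (i:ℝ) * q i * M i s) - ∑' i : ℕ, k i * x s * M i s) := by
      refine setIntegral_congr_fun measurableSet_Ioc (fun s hs => ?_)
      have hkxm : (∑' i : ℕ, k i * x s * M i s) = x s * ∑' i : ℕ, k i * M i s := by
        rw [← tsum_mul_left]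
        exact tsum_congr (fun i => by ring)
      rw [hkxm]
      ring
    rw [hcong, MeasureTheory.integral_sub hQInt hBInt] at h
    linarith
  -- finite-N algebraic identity
  have halg : ∀ N : ℕ,
      (∑ i ∈ Finset.range (N+1), ((i:ℝ) + 1) * M i t)
        - (∑ i ∈ Finset.range (N+1), ((i:ℝ) + 1) * M i 0)
      = r * t + ((∑ j ∈ Finset.range N, a j) - ((N:ℝ) + 1) * a N)
        - ∑ i ∈ Finset.range (N+1), ((i:ℝ) + 1) * c i := by
    intro N
    induction N with
    | zero =>
      simp only [Finset.range_one, Finset.sum_singleton, Finset.range_zero, Finset.sum_empty,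
        Nat.cast_zero]
      norm_num
      linarith [heq0]
    | succ N ih =>
      rw [Finset.sum_range_succ (f := fun i => ((i:ℝ) + 1) * M i t),
          Finset.sum_range_succ (f := fun i => ((i:ℝ) + 1) * M i 0),
          Finset.sum_range_succ (f := fun i => ((i:ℝ) + 1) * c i),
          Finset.sum_range_succ (f := fun j => a j)]
      rw [show ((N + 1 : ℕ) : ℝ) = (N : ℝ) + 1 from by push_cast; ring]
      linear_combination ih + ((N:ℝ) + 2) * heqM N
  -- d summability
  have hdsumm : Summable (fun i : ℕ => ((i:ℝ) + 1) * |d i|) := by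
    have h1 := hSN t htmem
    have h2 := hsol.summable_norm 0 h0D
    refine (h1.add h2).of_nonneg_of_le
      (fun i => mul_nonneg (by positivity) (abs_nonneg _)) (fun i => ?_)
    simp only [hddef]
    have hMt := hMpos i t htmem
    have hM0 := hsol.M_nonneg i 0 h0D
    have habs : |M i t - M i 0| ≤ M i t + M i 0 := abs_le.mpr ⟨by linarith, by linarith⟩
    have h3 := mul_le_mul_of_nonneg_left habs (by positivity : (0:ℝ) ≤ (i:ℝ) + 1)
    have h4 : ((i:ℝ) + 1) * (M i t + M i 0) = ((i:ℝ) + 1) * M i t + ((i:ℝ) + 1) * M i 0 := by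
      ring
    linarith
  -- partial sums of a equal integrals
  have hparta : ∀ n : ℕ, ∑ j ∈ Finset.range n, a j
      = ∫ s in Ioc (0:ℝ) t, ∑ j ∈ Finset.range n, k j * x s * M j s := by
    intro n
    simp only [hadef]
    exact (MeasureTheory.integral_finset_sum _ (fun j _ => hbInt j)).symm
  have hasumm : Summable a := by
    refine summable_of_sum_range_le
      (c := ∫ s in Ioc (0:ℝ) t, ∑' i : ℕ, k i * x s * M i s) ha0 (fun n => ?_)
    rw [hparta n]
    refine MeasureTheory.integral_mono_ae
      (MeasureTheory.integrable_finset_sum _ (fun j _ => hbInt j)) hBInt ?_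
    filter_upwards [ae_restrict_mem measurableSet_Ioc] with s hs
    exact Summable.sum_le_tsum _ (fun i _ => hb_nonneg i s (hIoc hs)) (hSb s (hIoc hs))
  have haN := seq_limit_aux ha0 hc0 hrec hasumm hdsumm
  -- limit of partial sums of a
  have hBtend : Tendsto (fun n => ∑ j ∈ Finset.range n, a j) atTop
      (𝓝 (∫ s in Ioc (0:ℝ) t, ∑' i : ℕ, k i * x s * M i s)) := by
    refine Tendsto.congr (fun n => (hparta n).symm) ?_
    refine MeasureTheory.tendsto_integral_of_dominated_convergence
      (fun s => ∑' i : ℕ, k i * x s * M i s) (fun n => ?_) hBInt (fun n => ?_) ?_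
    · exact ((continuousOn_finset_sum _ (fun i _ => hbC i)).mono hIoc).aestronglyMeasurable
        measurableSet_Ioc
    · filter_upwards [ae_restrict_mem measurableSet_Ioc] with s hs
      rw [Real.norm_eq_abs, abs_of_nonneg (Finset.sum_nonneg (fun i _ => hb_nonneg i s (hIoc hs)))]
      exact Summable.sum_le_tsum _ (fun i _ => hb_nonneg i s (hIoc hs)) (hSb s (hIoc hs))
    · filter_upwards [ae_restrict_mem measurableSet_Ioc] with s hs
      exact (hSb s (hIoc hs)).hasSum.tendsto_sum_nat
  -- limit of partial sums of (i+1) * c i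
  have hpartc : ∀ n : ℕ, ∑ i ∈ Finset.range n, ((i:ℝ) + 1) * c i
      = ∫ s in Ioc (0:ℝ) t, ∑ i ∈ Finset.range n, ((i:ℝ) + 1) * (p i + q i) * M i s := by
    intro n
    rw [MeasureTheory.integral_finset_sum (Finset.range n) (fun i _ => hPcInt i)]
    refine Finset.sum_congr rfl (fun i _ => ?_)
    have he : (fun s => ((i:ℝ) + 1) * (p i + q i) * M i s)
        = fun s => ((i:ℝ) + 1) * ((p i + q i) * M i s) := by
      funext s; ring
    simp only [hcdef]
    rw [he, MeasureTheory.integral_const_mul, MeasureTheory.integral_const_mul,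
      MeasureTheory.integral_const_mul]
  have hPtend0 : Tendsto (fun n => ∑ i ∈ Finset.range n, ((i:ℝ) + 1) * c i) atTop
      (𝓝 (∫ s in Ioc (0:ℝ) t, ∑' i : ℕ, ((i:ℝ) + 1) * (p i + q i) * M i s)) := by
    refine Tendsto.congr (fun n => (hpartc n).symm) ?_
    refine MeasureTheory.tendsto_integral_of_dominated_convergence
      (fun s => ∑' i : ℕ, ((i:ℝ) + 1) * (p i + q i) * M i s) (fun n => ?_) hPInt (fun n => ?_) ?_
    · exact ((continuousOn_finset_sum _ (fun i _ => hPcC i)).mono hIoc).aestronglyMeasurable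
        measurableSet_Ioc
    · filter_upwards [ae_restrict_mem measurableSet_Ioc] with s hs
      have hterm : ∀ i : ℕ, 0 ≤ ((i:ℝ) + 1) * (p i + q i) * M i s := fun i =>
        mul_nonneg (mul_nonneg (by positivity) (add_nonneg (hp i) (hq i))) (hMpos i s (hIoc hs))
      rw [Real.norm_eq_abs, abs_of_nonneg (Finset.sum_nonneg (fun i _ => hterm i))]
      exact Summable.sum_le_tsum _ (fun i _ => hterm i) (hSP s (hIoc hs))
    · filter_upwards [ae_restrict_mem measurableSet_Ioc] with s hs
      exact (hSP s (hIoc hs)).hasSum.tendsto_sum_nat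
  have hPtend : Tendsto (fun N => ∑ i ∈ Finset.range (N+1), ((i:ℝ) + 1) * c i) atTop
      (𝓝 (∫ s in Ioc (0:ℝ) t, ∑' i : ℕ, ((i:ℝ) + 1) * (p i + q i) * M i s)) :=
    hPtend0.comp (tendsto_add_atTop_nat 1)
  -- limits of partial sums of the norms
  have hUt : Tendsto (fun N => ∑ i ∈ Finset.range (N+1), ((i:ℝ) + 1) * M i t) atTop
      (𝓝 (∑' i : ℕ, ((i:ℝ) + 1) * M i t)) :=
    ((hSN t htmem).hasSum.tendsto_sum_nat).comp (tendsto_add_atTop_nat 1)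
  have hU0 : Tendsto (fun N => ∑ i ∈ Finset.range (N+1), ((i:ℝ) + 1) * M i 0) atTop
      (𝓝 (∑' i : ℕ, ((i:ℝ) + 1) * M i 0)) :=
    ((hsol.summable_norm 0 h0D).hasSum.tendsto_sum_nat).comp (tendsto_add_atTop_nat 1)
  have haseq : Tendsto (fun N => r * t + ((∑ j ∈ Finset.range N, a j) - ((N:ℝ) + 1) * a N)
      - ∑ i ∈ Finset.range (N+1), ((i:ℝ) + 1) * c i) atTop
      (𝓝 (r * t + ((∫ s in Ioc (0:ℝ) t, ∑' i : ℕ, k i * x s * M i s) - 0)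
        - ∫ s in Ioc (0:ℝ) t, ∑' i : ℕ, ((i:ℝ) + 1) * (p i + q i) * M i s)) :=
    (((tendsto_const_nhds).add (hBtend.sub haN)).sub hPtend)
  have hMass : (∑' i : ℕ, ((i:ℝ) + 1) * M i t) - (∑' i : ℕ, ((i:ℝ) + 1) * M i 0)
      = r * t + ((∫ s in Ioc (0:ℝ) t, ∑' i : ℕ, k i * x s * M i s) - 0)
        - ∫ s in Ioc (0:ℝ) t, ∑' i : ℕ, ((i:ℝ) + 1) * (p i + q i) * M i s :=
    tendsto_nhds_unique (hUt.sub hU0) (haseq.congr (fun N => (halg N).symm))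
  -- split P - Q
  have hPQsplit : (∫ s in Ioc (0:ℝ) t, ∑' i : ℕ, ((i:ℝ) + 1) * (p i + q i) * M i s)
      - (∫ s in Ioc (0:ℝ) t, ∑' i : ℕ, (i:ℝ) * q i * M i s)
      = (∫ s in Ioc (0:ℝ) t, ∑' i : ℕ, (p i + q i) * M i s)
        + ∫ s in Ioc (0:ℝ) t, ∑' i : ℕ, (i:ℝ) * p i * M i s := by
    rw [← MeasureTheory.integral_sub hPInt hQInt, ← MeasureTheory.integral_add hPQ1Int hPQ2Int]
    refine setIntegral_congr_fun measurableSet_Ioc (fun s hs => ?_)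
    have hsI := hIoc hs
    have e1 : (∑' i : ℕ, ((i:ℝ) + 1) * (p i + q i) * M i s)
        = (∑' i : ℕ, (p i + q i) * M i s)
          + ((∑' i : ℕ, (i:ℝ) * p i * M i s) + ∑' i : ℕ, (i:ℝ) * q i * M i s) := by
      rw [← Summable.tsum_add (hSp s hsI) (hSq s hsI),
        ← Summable.tsum_add (hSpq s hsI) ((hSp s hsI).add (hSq s hsI))]
      exact tsum_congr (fun i => by ring)
    linarith [e1]
  -- conclude
  simp only [Utot]
  rw [intervalIntegral.integral_of_le ht0, intervalIntegral.integral_of_le ht0]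
  linarith [heqx, hMass, hPQsplit]
end
end

section
/- Every solution y of the silicosis system on [0,T) satisfies, for each m ≥ 1 and t ∈ [0,T): Σ_{i≥m} M_i(t) − Σ_{i≥m} M_i(0) + ∫_0^t Σ_{i≥m}(p_i+q_i)M_i(s) ds = ∫_0^t x(s) k_{m−1} M_{m−1}(s) ds. -/
open MeasureTheory Set Filter Topology

noncomputable section

/-- the moment identity with constant weights `gᵢ = 1` (equation (5.6)):
for every solution on `[0,T)`, every `m ≥ 1` and `t ∈ [0,T)`,
`∑_{i≥m} Mᵢ(t) − ∑_{i≥m} Mᵢ(0) + ∫₀ᵗ ∑_{i≥m}(pᵢ+qᵢ)Mᵢ = ∫₀ᵗ x k_{m−1} M_{m−1}`. -/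
theorem silicosis_tail_identity
    (k p q : ℕ → ℝ)
    (hk : ∀ i, 0 ≤ k i) (hp : ∀ i, 0 ≤ p i) (hq : ∀ i, 0 ≤ q i)
    (r α : ℝ) (hr : 0 ≤ r) (hα : 0 ≤ α)
    (T : ℝ) (x : ℝ → ℝ) (M : ℕ → ℝ → ℝ)
    (hsol : IsSol k p q r α (Set.Ico 0 T) x M) :
    ∀ m : ℕ, 1 ≤ m → ∀ t ∈ Set.Ico (0:ℝ) T,
      (∑' i : ℕ, M (m+i) t) - (∑' i : ℕ, M (m+i) 0)
        + (∫ s in (0:ℝ)..t, ∑' i : ℕ, (p (m+i) + q (m+i)) * M (m+i) s)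
      = ∫ s in (0:ℝ)..t, x s * k (m-1) * M (m-1) s := by
  intro m hm t ht
  obtain ⟨ht0, htT⟩ := ht
  have hsub : Icc (0:ℝ) t ⊆ Ico 0 T := fun s hs => ⟨hs.1, lt_of_le_of_lt hs.2 htT⟩
  have hIocIcc : Ioc (0:ℝ) t ⊆ Icc 0 t := Ioc_subset_Icc_self
  have hxC : ContinuousOn x (Icc 0 t) := hsol.x_cont.mono hsub
  have hMC : ∀ i, ContinuousOn (M i) (Icc 0 t) := fun i => (hsol.M_cont i).mono hsub
  set c : ℕ → ℝ := fun i => (i:ℝ) * p i + (i:ℝ) * q i + k i with hc_def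
  have hc0 : ∀ i, 0 ≤ c i := fun i => by
    have h1 := hk i; have h2 := hp i; have h3 := hq i
    have h4 : (0:ℝ) ≤ (i:ℝ) := Nat.cast_nonneg i
    simp only [hc_def]; nlinarith
  have hkc : ∀ i, k i ≤ c i := fun i => by
    have h2 := hp i; have h3 := hq i
    have h4 : (0:ℝ) ≤ (i:ℝ) := Nat.cast_nonneg i
    simp only [hc_def]; nlinarith
  set g : ℝ → ℝ := fun s => ∑' i, c i * M i s with hg_def
  have hM0 : ∀ i, ∀ s ∈ Icc (0:ℝ) t, 0 ≤ M i s := fun i s hs => hsol.M_nonneg i s (hsub hs)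
  have hx0 : ∀ s ∈ Icc (0:ℝ) t, 0 ≤ x s := fun s hs => hsol.x_nonneg s (hsub hs)
  have hmom : ∀ s ∈ Icc (0:ℝ) t, Summable (fun i => c i * M i s) :=
    fun s hs => hsol.summable_mom s (hsub hs)
  have hMsum : ∀ s ∈ Icc (0:ℝ) t, Summable (fun i : ℕ => M i s) := by
    intro s hs
    refine (hsol.summable_norm s (hsub hs)).of_nonneg_of_le (fun i => hM0 i s hs) ?_
    intro i
    nlinarith [hM0 i s hs, (Nat.cast_nonneg i : (0:ℝ) ≤ (i:ℝ))]
  have hMtail : ∀ s ∈ Icc (0:ℝ) t, Summable (fun j : ℕ => M (m + j) s) :=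
    fun s hs => (hMsum s hs).comp_injective (add_right_injective m)
  have hcMtail : ∀ s ∈ Icc (0:ℝ) t, Summable (fun j : ℕ => c (m + j) * M (m + j) s) :=
    fun s hs => (hmom s hs).comp_injective (add_right_injective m)
  have hPQle : ∀ i : ℕ, 1 ≤ i → ∀ s ∈ Icc (0:ℝ) t,
      (p i + q i) * M i s ≤ c i * M i s := by
    intro i hi s hs
    have h1 : (1:ℝ) ≤ (i:ℝ) := by exact_mod_cast hi
    have hle : p i + q i ≤ c i := by
      have h2 := hp i; have h3 := hq i; have h4 := hk i
      simp only [hc_def]; nlinarith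
    exact mul_le_mul_of_nonneg_right hle (hM0 i s hs)
  have hPQtail : ∀ s ∈ Icc (0:ℝ) t,
      Summable (fun j : ℕ => (p (m + j) + q (m + j)) * M (m + j) s) := by
    intro s hs
    refine (hcMtail s hs).of_nonneg_of_le (fun j => ?_) (fun j => ?_)
    · have h2 := hp (m+j); have h3 := hq (m+j); have h4 := hM0 (m+j) s hs; positivity
    · exact hPQle (m+j) (le_add_right hm) s hs
  have hsum_le_g : ∀ s ∈ Icc (0:ℝ) t, ∀ n : ℕ,
      (∑ j ∈ Finset.range n, c (m + j) * M (m + j) s) ≤ g s := by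
    intro s hs n
    have he : (∑ j ∈ Finset.range n, c (m + j) * M (m + j) s)
        = ∑ i ∈ (Finset.range n).map (addLeftEmbedding m), c i * M i s := by
      rw [Finset.sum_map]; rfl
    rw [he]
    exact Summable.sum_le_tsum _ (fun i _ => mul_nonneg (hc0 i) (hM0 i s hs)) (hmom s hs)
  have hkMg : ∀ i, ∀ s ∈ Icc (0:ℝ) t, k i * M i s ≤ g s := by
    intro i s hs
    have h1 : k i * M i s ≤ c i * M i s :=
      mul_le_mul_of_nonneg_right (hkc i) (hM0 i s hs)
    exact h1.trans (Summable.le_tsum (hmom s hs) i (fun j _ => mul_nonneg (hc0 j) (hM0 j s hs)))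
  obtain ⟨C, hC⟩ := hsol.norm_bdd t hsub
  have hxC' : ∀ s ∈ Icc (0:ℝ) t, x s ≤ C := by
    intro s hs
    have hts : (0:ℝ) ≤ ∑' i : ℕ, ((i : ℝ) + 1) * M i s :=
      tsum_nonneg fun i => mul_nonneg (by positivity) (hM0 i s hs)
    linarith [hC s hs]
  have hC0 : 0 ≤ C := le_trans (hx0 0 ⟨le_refl _, ht0⟩) (hxC' 0 ⟨le_refl _, ht0⟩)
  have hgInt : IntegrableOn g (Ioc 0 t) volume := by
    have h := hsol.mom_int t ⟨ht0, htT⟩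
    rw [intervalIntegrable_iff_integrableOn_Ioc_of_le ht0] at h
    exact h
  have hII : ∀ f : ℝ → ℝ, ContinuousOn f (Icc 0 t) → IntervalIntegrable f volume 0 t := by
    intro f hf
    apply ContinuousOn.intervalIntegrable
    rwa [uIcc_of_le ht0]
  set b : ℕ → ℝ := fun j => ∫ s in (0:ℝ)..t, x s * k (m - 1 + j) * M (m - 1 + j) s with hb_def
  set Cq : ℕ → ℝ := fun i => ∫ s in (0:ℝ)..t, (p i + q i) * M i s with hCq_def
  have key : ∀ N : ℕ,
      (∑ j ∈ Finset.range (N+1), M (m+j) t) - (∑ j ∈ Finset.range (N+1), M (m+j) 0)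
        + ∑ j ∈ Finset.range (N+1), Cq (m+j) = b 0 - b (N+1) := by
    intro N
    have hterm : ∀ j : ℕ, M (m+j) t - M (m+j) 0 + Cq (m+j) = b j - b (j+1) := by
      intro j
      have hi : 1 ≤ m + j := le_add_right hm
      have heq := hsol.eq_M (m+j) hi t ⟨ht0, htT⟩
      have hA : IntervalIntegrable (fun s => k (m+j-1) * x s * M (m+j-1) s) volume 0 t :=
        hII _ ((continuousOn_const.mul hxC).mul (hMC _))
      have hB : IntervalIntegrable (fun s => k (m+j) * x s * M (m+j) s) volume 0 t :=
        hII _ ((continuousOn_const.mul hxC).mul (hMC _))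
      have hCi : IntervalIntegrable (fun s => (p (m+j) + q (m+j)) * M (m+j) s) volume 0 t :=
        hII _ (continuousOn_const.mul (hMC _))
      rw [intervalIntegral.integral_sub (hA.sub hB) hCi, intervalIntegral.integral_sub hA hB]
        at heq
      have e1 : (∫ s in (0:ℝ)..t, k (m+j-1) * x s * M (m+j-1) s) = b j := by
        simp only [hb_def]
        rw [show m - 1 + j = m + j - 1 from by omega]
        exact intervalIntegral.integral_congr (fun s _ => by ring)
      have e2 : (∫ s in (0:ℝ)..t, k (m+j) * x s * M (m+j) s) = b (j+1) := by
        simp only [hb_def]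
        rw [show m - 1 + (j+1) = m + j from by omega]
        exact intervalIntegral.integral_congr (fun s _ => by ring)
      rw [e1, e2] at heq
      simp only [hCq_def]
      linarith
    calc (∑ j ∈ Finset.range (N+1), M (m+j) t) - (∑ j ∈ Finset.range (N+1), M (m+j) 0)
          + ∑ j ∈ Finset.range (N+1), Cq (m+j)
        = ∑ j ∈ Finset.range (N+1), (M (m+j) t - M (m+j) 0 + Cq (m+j)) := by
          rw [Finset.sum_add_distrib, Finset.sum_sub_distrib]
      _ = ∑ j ∈ Finset.range (N+1), (b j - b (j+1)) :=
          Finset.sum_congr rfl (fun j _ => hterm j)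
      _ = b 0 - b (N+1) := Finset.sum_range_sub' b (N+1)
  -- limit of b (N+1)
  have hbody : ∀ N : ℕ, b (N+1) = ∫ s in Ioc (0:ℝ) t, x s * k (m+N) * M (m+N) s := by
    intro N
    simp only [hb_def]
    rw [show m - 1 + (N+1) = m + N from by omega, intervalIntegral.integral_of_le ht0]
  have hDCT1 : Tendsto (fun N : ℕ => ∫ s in Ioc (0:ℝ) t, x s * k (m+N) * M (m+N) s)
      atTop (𝓝 (∫ s in Ioc (0:ℝ) t, (0:ℝ))) := by
    apply tendsto_integral_of_dominated_convergence (bound := fun s => C * g s)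
    · intro N
      exact (((hxC.mono hIocIcc).mul continuousOn_const).mul
        ((hMC _).mono hIocIcc)).aestronglyMeasurable measurableSet_Ioc
    · exact hgInt.const_mul C
    · intro N
      refine (ae_restrict_iff' measurableSet_Ioc).2 (ae_of_all _ fun s hs => ?_)
      have hs' := hIocIcc hs
      have hnn : 0 ≤ x s * k (m+N) * M (m+N) s :=
        mul_nonneg (mul_nonneg (hx0 s hs') (hk _)) (hM0 _ s hs')
      rw [Real.norm_eq_abs, abs_of_nonneg hnn]
      calc x s * k (m+N) * M (m+N) s = x s * (k (m+N) * M (m+N) s) := by ring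
        _ ≤ C * g s := by
            refine mul_le_mul (hxC' s hs') (hkMg _ s hs')
              (mul_nonneg (hk _) (hM0 _ s hs')) hC0
    · refine (ae_restrict_iff' measurableSet_Ioc).2 (ae_of_all _ fun s hs => ?_)
      have hs' := hIocIcc hs
      have h1 : Tendsto (fun j : ℕ => x s * (c (m+j) * M (m+j) s)) atTop (𝓝 (x s * 0)) :=
        tendsto_const_nhds.mul ((hcMtail s hs').tendsto_atTop_zero)
      rw [mul_zero] at h1
      refine squeeze_zero (fun N => ?_) (fun N => ?_) h1
      · exact mul_nonneg (mul_nonneg (hx0 s hs') (hk _)) (hM0 _ s hs')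
      · calc x s * k (m+N) * M (m+N) s = x s * (k (m+N) * M (m+N) s) := by ring
          _ ≤ x s * (c (m+N) * M (m+N) s) :=
            mul_le_mul_of_nonneg_left
              (mul_le_mul_of_nonneg_right (hkc _) (hM0 _ s hs')) (hx0 s hs')
  have hb_lim : Tendsto (fun N : ℕ => b (N+1)) atTop (𝓝 0) := by
    have he : (fun N : ℕ => b (N+1))
        = fun N : ℕ => ∫ s in Ioc (0:ℝ) t, x s * k (m+N) * M (m+N) s := funext hbody
    rw [he]
    simpa using hDCT1
  -- limit of the Cq sums
  have hDCT2 : Tendsto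
      (fun N : ℕ => ∫ s in Ioc (0:ℝ) t,
        ∑ j ∈ Finset.range (N+1), (p (m+j) + q (m+j)) * M (m+j) s)
      atTop (𝓝 (∫ s in Ioc (0:ℝ) t, ∑' j : ℕ, (p (m+j) + q (m+j)) * M (m+j) s)) := by
    apply tendsto_integral_of_dominated_convergence (bound := g)
    · intro N
      have hco : ContinuousOn
          (fun s => ∑ j ∈ Finset.range (N+1), (p (m+j) + q (m+j)) * M (m+j) s) (Icc 0 t) := by
        apply continuousOn_finset_sum
        intro j _
        exact continuousOn_const.mul (hMC _)
      exact (hco.mono hIocIcc).aestronglyMeasurable measurableSet_Ioc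
    · exact hgInt
    · intro N
      refine (ae_restrict_iff' measurableSet_Ioc).2 (ae_of_all _ fun s hs => ?_)
      have hs' := hIocIcc hs
      have hnn : 0 ≤ ∑ j ∈ Finset.range (N+1), (p (m+j) + q (m+j)) * M (m+j) s := by
        apply Finset.sum_nonneg
        intro j _
        have h2 := hp (m+j); have h3 := hq (m+j); have h4 := hM0 (m+j) s hs'; positivity
      rw [Real.norm_eq_abs, abs_of_nonneg hnn]
      calc (∑ j ∈ Finset.range (N+1), (p (m+j) + q (m+j)) * M (m+j) s)
          ≤ ∑ j ∈ Finset.range (N+1), c (m+j) * M (m+j) s :=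
            Finset.sum_le_sum (fun j _ => hPQle (m+j) (le_add_right hm) s hs')
        _ ≤ g s := hsum_le_g s hs' (N+1)
    · refine (ae_restrict_iff' measurableSet_Ioc).2 (ae_of_all _ fun s hs => ?_)
      have hs' := hIocIcc hs
      exact ((hPQtail s hs').hasSum.tendsto_sum_nat).comp (tendsto_add_atTop_nat 1)
  have hCq_eq : ∀ N : ℕ, (∑ j ∈ Finset.range (N+1), Cq (m+j))
      = ∫ s in Ioc (0:ℝ) t, ∑ j ∈ Finset.range (N+1), (p (m+j) + q (m+j)) * M (m+j) s := by
    intro N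
    rw [integral_finset_sum]
    · simp only [hCq_def]
      refine Finset.sum_congr rfl (fun j _ => ?_)
      rw [intervalIntegral.integral_of_le ht0]
    · intro j _
      have h := hII (fun s => (p (m+j) + q (m+j)) * M (m+j) s)
        (continuousOn_const.mul (hMC _))
      rw [intervalIntegrable_iff_integrableOn_Ioc_of_le ht0] at h
      exact h
  have hCq_lim : Tendsto (fun N : ℕ => ∑ j ∈ Finset.range (N+1), Cq (m+j)) atTop
      (𝓝 (∫ s in Ioc (0:ℝ) t, ∑' j : ℕ, (p (m+j) + q (m+j)) * M (m+j) s)) := by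
    have he : (fun N : ℕ => ∑ j ∈ Finset.range (N+1), Cq (m+j))
        = fun N : ℕ => ∫ s in Ioc (0:ℝ) t,
            ∑ j ∈ Finset.range (N+1), (p (m+j) + q (m+j)) * M (m+j) s := funext hCq_eq
    rw [he]; exact hDCT2
  have hMt_lim : Tendsto (fun N : ℕ => ∑ j ∈ Finset.range (N+1), M (m+j) t) atTop
      (𝓝 (∑' j : ℕ, M (m+j) t)) :=
    ((hMtail t ⟨ht0, le_refl t⟩).hasSum.tendsto_sum_nat).comp (tendsto_add_atTop_nat 1)
  have hM0_lim : Tendsto (fun N : ℕ => ∑ j ∈ Finset.range (N+1), M (m+j) 0) atTop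
      (𝓝 (∑' j : ℕ, M (m+j) 0)) :=
    ((hMtail 0 ⟨le_refl 0, ht0⟩).hasSum.tendsto_sum_nat).comp (tendsto_add_atTop_nat 1)
  have hL : Tendsto (fun N : ℕ =>
      (∑ j ∈ Finset.range (N+1), M (m+j) t) - (∑ j ∈ Finset.range (N+1), M (m+j) 0)
        + ∑ j ∈ Finset.range (N+1), Cq (m+j)) atTop
      (𝓝 ((∑' j : ℕ, M (m+j) t) - (∑' j : ℕ, M (m+j) 0)
        + ∫ s in Ioc (0:ℝ) t, ∑' j : ℕ, (p (m+j) + q (m+j)) * M (m+j) s)) :=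
    (hMt_lim.sub hM0_lim).add hCq_lim
  have hR : Tendsto (fun N : ℕ => b 0 - b (N+1)) atTop (𝓝 (b 0 - 0)) :=
    tendsto_const_nhds.sub hb_lim
  have hmain := tendsto_nhds_unique (hL.congr key) hR
  rw [sub_zero] at hmain
  have hb0 : b 0 = ∫ s in (0:ℝ)..t, x s * k (m-1) * M (m-1) s := by
    simp only [hb_def, add_zero]
  rw [intervalIntegral.integral_of_le ht0]
  rw [← hb0, ← hmain]
end
end

section
/- Every solution y of the silicosis system on [0,T) satisfies, for each m ≥ 1 and t ∈ [0,T): Σ_{i≥m} i M_i(t) − Σ_{i≥m} i M_i(0) + ∫_0^t Σ_{i≥m} i(p_i+q_i)M_i(s) ds = ∫_0^t m x(s) k_{m−1} M_{m−1}(s) ds + ∫_0^t Σ_{i≥m} x(s) k_i M_i(s) ds. -/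
open MeasureTheory Set Filter

noncomputable section

open ENNReal Topology

set_option maxHeartbeats 1000000

lemma abel_aux (A : ℕ → ℝ) (m : ℝ) (N : ℕ) :
    ∑ j ∈ Finset.range N, (m + j) * (A j - A (j+1))
      = m * A 0 + (∑ j ∈ Finset.range N, A (j+1)) - (m + N) * A N := by
  induction N with
  | zero => simp
  | succ n ih =>
      rw [Finset.sum_range_succ, ih, Finset.sum_range_succ]
      push_cast; ring

lemma interchange_aux {t : ℝ} (ht0 : 0 ≤ t) (f : ℕ → ℝ → ℝ) (g : ℝ → ℝ)
    (hf : ∀ i, ContinuousOn (f i) (Set.Icc 0 t))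
    (hnn : ∀ i, ∀ s ∈ Set.Icc (0:ℝ) t, 0 ≤ f i s)
    (hsum : ∀ s ∈ Set.Icc (0:ℝ) t, Summable fun i => f i s)
    (hle : ∀ s ∈ Set.Icc (0:ℝ) t, (∑' i, f i s) ≤ g s)
    (hg : MeasureTheory.IntegrableOn g (Set.Ioc 0 t)) :
    (Summable fun i => ∫ s in (0:ℝ)..t, f i s) ∧
      (∫ s in (0:ℝ)..t, ∑' i, f i s) = ∑' i, ∫ s in (0:ℝ)..t, f i s := by
  have hIoc : Set.Ioc (0:ℝ) t ⊆ Set.Icc 0 t := Set.Ioc_subset_Icc_self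
  have hmeas : ∀ i, AEStronglyMeasurable (f i) (volume.restrict (Set.Ioc 0 t)) := fun i =>
    ((hf i).mono hIoc).aestronglyMeasurable measurableSet_Ioc
  have hII : ∀ i, IntervalIntegrable (f i) volume 0 t := fun i =>
    ContinuousOn.intervalIntegrable (by rw [Set.uIcc_of_le ht0]; exact hf i)
  have hfin : (∑' i, ∫⁻ s in Set.Ioc (0:ℝ) t, ‖f i s‖₊) ≠ ∞ := by
    rw [← MeasureTheory.lintegral_tsum (fun i => (hmeas i).nnnorm.aemeasurable.coe_nnreal_ennreal)]
    have hb : ∫⁻ s in Set.Ioc (0:ℝ) t, (∑' i, (‖f i s‖₊ : ℝ≥0∞))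
        ≤ ∫⁻ s in Set.Ioc (0:ℝ) t, (‖g s‖₊ : ℝ≥0∞) := by
      refine lintegral_mono_ae ?_
      filter_upwards [ae_restrict_mem measurableSet_Ioc] with s hs
      have hs' := hIoc hs
      calc (∑' i, (‖f i s‖₊ : ℝ≥0∞)) = ∑' i, ENNReal.ofReal (f i s) := by
            refine tsum_congr fun i => Real.enorm_eq_ofReal (hnn i s hs')
        _ = ENNReal.ofReal (∑' i, f i s) :=
            (ENNReal.ofReal_tsum_of_nonneg (fun i => hnn i s hs') (hsum s hs')).symm
        _ ≤ ENNReal.ofReal (g s) := ENNReal.ofReal_le_ofReal (hle s hs')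
        _ ≤ (‖g s‖₊ : ℝ≥0∞) := Real.ofReal_le_enorm _
    exact ne_top_of_le_ne_top hg.2.ne hb
  have hint : (∫ s in Set.Ioc (0:ℝ) t, ∑' i, f i s) = ∑' i, ∫ s in Set.Ioc (0:ℝ) t, f i s :=
    MeasureTheory.integral_tsum hmeas hfin
  constructor
  · refine summable_of_sum_range_le (c := ∫ s in (0:ℝ)..t, g s) ?_ ?_
    · intro i
      exact intervalIntegral.integral_nonneg ht0 (fun s hs => hnn i s hs)
    · intro n
      have h1 : IntervalIntegrable (fun s => ∑ i ∈ Finset.range n, f i s) volume 0 t := by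
        have h0 := IntervalIntegrable.sum (Finset.range n) (fun i (_ : i ∈ Finset.range n) => hII i)
        have h2 : (∑ i ∈ Finset.range n, f i) = fun s => ∑ i ∈ Finset.range n, f i s := by
          funext s; simp
        rwa [h2] at h0
      have hgI : IntervalIntegrable g volume 0 t := by
        rw [intervalIntegrable_iff_integrableOn_Ioc_of_le ht0]; exact hg
      rw [← intervalIntegral.integral_finset_sum (fun i _ => hII i)]
      refine intervalIntegral.integral_mono_on ht0 h1 hgI ?_
      intro s hs
      calc ∑ i ∈ Finset.range n, f i s ≤ ∑' i, f i s :=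
            Summable.sum_le_tsum _ (fun i _ => hnn i s hs) (hsum s hs)
        _ ≤ g s := hle s hs
  · rw [intervalIntegral.integral_of_le ht0, hint]
    refine tsum_congr fun i => ?_
    rw [intervalIntegral.integral_of_le ht0]

lemma seq_limit (a pq pq1 Mt M0 : ℕ → ℝ) (m : ℕ) (hm : 1 ≤ m)
    (hstep : ∀ i : ℕ, Mt (i+1) - M0 (i+1) = a i - a (i+1) - pq1 (i+1))
    (hpq : ∀ i, pq i = (i:ℝ) * pq1 i)
    (ha0 : ∀ i, 0 ≤ a i) (hpq10 : ∀ i, 0 ≤ pq1 i)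
    (hMt0 : ∀ i, 0 ≤ Mt i) (hM00 : ∀ i, 0 ≤ M0 i)
    (hsa : Summable a) (hspq : Summable pq)
    (hsMt : Summable (fun i : ℕ => (i:ℝ) * Mt i)) (hsM0 : Summable (fun i : ℕ => (i:ℝ) * M0 i)) :
    (∑' j : ℕ, ((m + j : ℕ) : ℝ) * Mt (m+j)) - (∑' j : ℕ, ((m + j : ℕ) : ℝ) * M0 (m+j))
      + (∑' j : ℕ, pq (m+j))
    = (m : ℝ) * a (m-1) + ∑' j : ℕ, a (m+j) := by
  have hshift : ∀ (f : ℕ → ℝ), Summable f → ∀ n : ℕ, Summable fun j => f (n + j) :=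
    fun f hf n => ((summable_nat_add_iff n).mpr hf).congr (fun j => by rw [Nat.add_comm])
  have htail : ∀ (f : ℕ → ℝ), Tendsto (fun n : ℕ => ∑' j : ℕ, f (n + 1 + j)) atTop (𝓝 0) := by
    intro f
    have h1 := tendsto_sum_nat_add f
    have h2 := h1.comp (tendsto_add_atTop_nat 1)
    exact h2.congr fun n => tsum_congr fun j => congrArg f (Nat.add_comm j (n+1))
  have keyEq : ∀ n N : ℕ,
      ∑ j ∈ Finset.range N, (Mt (n+1+j) - M0 (n+1+j) + pq1 (n+1+j)) = a n - a (n+N) := by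
    intro n N
    induction N with
    | zero => simp
    | succ N ih =>
        rw [Finset.sum_range_succ, ih]
        have h := hstep (n + N)
        have e1 : n + 1 + N = n + N + 1 := by omega
        have e2 : n + (N+1) = n + N + 1 := by omega
        rw [e1, e2]
        linarith
  have sW : ∀ n : ℕ, Summable (fun j => ((n+1+j : ℕ):ℝ) * Mt (n+1+j)) :=
    fun n => hshift _ hsMt (n+1)
  have sPQ : ∀ n : ℕ, Summable (fun j => pq (n+1+j)) := fun n => hshift pq hspq (n+1)
  have s1 : ∀ n : ℕ, Summable (fun j => Mt (n+1+j)) := by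
    intro n
    refine Summable.of_nonneg_of_le (fun j => hMt0 _) (fun j => ?_) (sW n)
    refine le_mul_of_one_le_left (hMt0 _) ?_
    exact_mod_cast Nat.one_le_iff_ne_zero.mpr (by omega)
  have s2 : ∀ n : ℕ, Summable (fun j => pq1 (n+1+j)) := by
    intro n
    refine Summable.of_nonneg_of_le (fun j => hpq10 _) (fun j => ?_) (sPQ n)
    rw [hpq (n+1+j)]
    refine le_mul_of_one_le_left (hpq10 _) ?_
    exact_mod_cast Nat.one_le_iff_ne_zero.mpr (by omega)
  have dagger : ∀ n : ℕ, a n ≤ (∑' j : ℕ, Mt (n+1+j)) + ∑' j : ℕ, pq1 (n+1+j) := by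
    intro n
    have hsum_u : Summable (fun j => Mt (n+1+j) + pq1 (n+1+j)) := (s1 n).add (s2 n)
    have hbound : ∀ N, a n ≤ (∑' j : ℕ, (Mt (n+1+j) + pq1 (n+1+j))) + a (n+N) := by
      intro N
      have h := keyEq n N
      have h2 : ∑ j ∈ Finset.range N, (Mt (n+1+j) - M0 (n+1+j) + pq1 (n+1+j))
          ≤ ∑ j ∈ Finset.range N, (Mt (n+1+j) + pq1 (n+1+j)) :=
        Finset.sum_le_sum fun j _ => by have := hM00 (n+1+j); linarith
      have h3 : ∑ j ∈ Finset.range N, (Mt (n+1+j) + pq1 (n+1+j))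
          ≤ ∑' j : ℕ, (Mt (n+1+j) + pq1 (n+1+j)) :=
        Summable.sum_le_tsum _ (fun j _ => add_nonneg (hMt0 _) (hpq10 _)) hsum_u
      linarith
    have hlim : Tendsto (fun N : ℕ => (∑' j : ℕ, (Mt (n+1+j) + pq1 (n+1+j))) + a (n+N))
        atTop (𝓝 ((∑' j : ℕ, (Mt (n+1+j) + pq1 (n+1+j))) + 0)) := by
      refine tendsto_const_nhds.add ?_
      have h4 := (hsa.tendsto_atTop_zero.comp (tendsto_add_atTop_nat n))
      exact h4.congr fun N => congrArg a (Nat.add_comm N n)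
    have h4 := ge_of_tendsto hlim (Eventually.of_forall hbound)
    rw [Summable.tsum_add (s1 n) (s2 n)] at h4
    linarith
  have hbig : ∀ n : ℕ, ((n:ℝ)+1) * a n
      ≤ (∑' j : ℕ, ((n+1+j : ℕ):ℝ) * Mt (n+1+j)) + ∑' j : ℕ, pq (n+1+j) := by
    intro n
    have hcast : ∀ j : ℕ, ((n:ℝ)+1) ≤ ((n+1+j : ℕ):ℝ) := by
      intro j; push_cast; linarith [Nat.cast_nonneg (α := ℝ) j]
    calc ((n:ℝ)+1) * a n
        ≤ ((n:ℝ)+1) * ((∑' j : ℕ, Mt (n+1+j)) + ∑' j : ℕ, pq1 (n+1+j)) :=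
          mul_le_mul_of_nonneg_left (dagger n) (by positivity)
      _ = (∑' j : ℕ, ((n:ℝ)+1) * Mt (n+1+j)) + ∑' j : ℕ, ((n:ℝ)+1) * pq1 (n+1+j) := by
          rw [mul_add, tsum_mul_left, tsum_mul_left]
      _ ≤ (∑' j : ℕ, ((n+1+j : ℕ):ℝ) * Mt (n+1+j)) + ∑' j : ℕ, pq (n+1+j) := by
          refine add_le_add ?_ ?_
          · exact Summable.tsum_le_tsum (fun j => mul_le_mul_of_nonneg_right (hcast j) (hMt0 _))
              ((s1 n).mul_left _) (sW n)
          · refine Summable.tsum_le_tsum (fun j => ?_) ((s2 n).mul_left _) (sPQ n)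
            rw [hpq (n+1+j)]
            exact mul_le_mul_of_nonneg_right (hcast j) (hpq10 _)
  have hzero : Tendsto (fun n : ℕ => ((n:ℝ)+1) * a n) atTop (𝓝 0) := by
    have h1 : Tendsto (fun n : ℕ =>
        (∑' j : ℕ, ((n+1+j : ℕ):ℝ) * Mt (n+1+j)) + ∑' j : ℕ, pq (n+1+j)) atTop (𝓝 (0+0)) := by
      refine Tendsto.add ?_ (htail pq)
      exact htail (fun i : ℕ => (i:ℝ) * Mt i)
    rw [add_zero] at h1
    exact squeeze_zero (fun n => mul_nonneg (by positivity) (ha0 n)) hbig h1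
  have hA : ∀ j : ℕ, a (m - 1 + (j+1)) = a (m + j) := fun j => congrArg a (by omega)
  have hMstep : ∀ j : ℕ, ((m+j : ℕ):ℝ) * Mt (m+j) - ((m+j : ℕ):ℝ) * M0 (m+j) + pq (m+j)
      = ((m:ℝ) + j) * (a (m-1+j) - a (m-1+(j+1))) := by
    intro j
    have h := hstep (m-1+j)
    have e : m - 1 + j + 1 = m + j := by omega
    rw [e] at h
    rw [hA j, hpq (m+j)]
    have ec : ((m+j : ℕ):ℝ) = (m:ℝ) + j := by push_cast; ring
    rw [ec]
    linear_combination ((m:ℝ) + j) * h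
  have partial_id : ∀ N : ℕ,
      ∑ j ∈ Finset.range N, (((m+j : ℕ):ℝ) * Mt (m+j) - ((m+j : ℕ):ℝ) * M0 (m+j) + pq (m+j))
      = (m:ℝ) * a (m-1+0) + (∑ j ∈ Finset.range N, a (m-1+(j+1))) - ((m:ℝ) + N) * a (m-1+N) := by
    intro N
    rw [Finset.sum_congr rfl (fun j _ => hMstep j)]
    exact abel_aux (fun j => a (m-1+j)) (m:ℝ) N
  have sMt' : Summable (fun j => ((m+j : ℕ):ℝ) * Mt (m+j)) := hshift _ hsMt m
  have sM0' : Summable (fun j => ((m+j : ℕ):ℝ) * M0 (m+j)) := hshift _ hsM0 m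
  have spq' : Summable (fun j => pq (m+j)) := hshift pq hspq m
  have sa' : Summable (fun j => a (m+j)) := hshift a hsa m
  have hLHS : Tendsto (fun N : ℕ => ∑ j ∈ Finset.range N,
      (((m+j : ℕ):ℝ) * Mt (m+j) - ((m+j : ℕ):ℝ) * M0 (m+j) + pq (m+j))) atTop
      (𝓝 ((∑' j : ℕ, ((m+j : ℕ):ℝ) * Mt (m+j)) - (∑' j : ℕ, ((m+j : ℕ):ℝ) * M0 (m+j))
        + ∑' j : ℕ, pq (m+j))) := by
    have h := (sMt'.hasSum.tendsto_sum_nat.sub sM0'.hasSum.tendsto_sum_nat).add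
      spq'.hasSum.tendsto_sum_nat
    refine h.congr fun N => ?_
    rw [← Finset.sum_sub_distrib, ← Finset.sum_add_distrib]
  have hRHS : Tendsto (fun N : ℕ =>
      (m:ℝ) * a (m-1+0) + (∑ j ∈ Finset.range N, a (m-1+(j+1))) - ((m:ℝ) + N) * a (m-1+N))
      atTop (𝓝 ((m:ℝ) * a (m-1) + (∑' j : ℕ, a (m+j)) - 0)) := by
    have e0 : m - 1 + 0 = m - 1 := by omega
    rw [e0]
    refine Tendsto.sub (Tendsto.add tendsto_const_nhds ?_) ?_
    · refine sa'.hasSum.tendsto_sum_nat.congr fun N => ?_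
      exact (Finset.sum_congr rfl fun j _ => hA j).symm
    · have h1 := hzero.comp (tendsto_add_atTop_nat (m-1))
      refine h1.congr fun N => ?_
      show ((↑(N + (m-1)) : ℝ) + 1) * a (N + (m-1)) = ((m:ℝ) + N) * a (m-1+N)
      have e : N + (m-1) = m - 1 + N := by omega
      rw [e]
      have e2 : ((m-1+N : ℕ):ℝ) + 1 = (m:ℝ) + N := by
        have h3 : (m - 1 + N + 1 : ℕ) = m + N := by omega
        calc ((m-1+N : ℕ):ℝ) + 1 = ((m-1+N+1 : ℕ):ℝ) := by push_cast; ring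
          _ = ((m+N : ℕ):ℝ) := by rw [h3]
          _ = (m:ℝ) + N := by push_cast; ring
      rw [e2]
  have hfin := tendsto_nhds_unique hLHS (hRHS.congr fun N => (partial_id N).symm)
  linarith [hfin]


/-- the moment identity with weights `gᵢ = i` (equation (5.7)):
for every solution on `[0,T)`, every `m ≥ 1` and `t ∈ [0,T)`,
`∑_{i≥m} i Mᵢ(t) − ∑_{i≥m} i Mᵢ(0) + ∫₀ᵗ ∑_{i≥m} i(pᵢ+qᵢ)Mᵢ
  = ∫₀ᵗ m x k_{m−1} M_{m−1} + ∫₀ᵗ ∑_{i≥m} x kᵢ Mᵢ`. -/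
theorem silicosis_weighted_tail_identity
    (k p q : ℕ → ℝ)
    (hk : ∀ i, 0 ≤ k i) (hp : ∀ i, 0 ≤ p i) (hq : ∀ i, 0 ≤ q i)
    (r α : ℝ) (hr : 0 ≤ r) (hα : 0 ≤ α)
    (T : ℝ) (x : ℝ → ℝ) (M : ℕ → ℝ → ℝ)
    (hsol : IsSol k p q r α (Set.Ico 0 T) x M) :
    ∀ m : ℕ, 1 ≤ m → ∀ t ∈ Set.Ico (0:ℝ) T,
      (∑' i : ℕ, ((m + i : ℕ) : ℝ) * M (m+i) t) - (∑' i : ℕ, ((m + i : ℕ) : ℝ) * M (m+i) 0)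
        + (∫ s in (0:ℝ)..t, ∑' i : ℕ, ((m + i : ℕ) : ℝ) * (p (m+i) + q (m+i)) * M (m+i) s)
      = (∫ s in (0:ℝ)..t, (m : ℝ) * x s * k (m-1) * M (m-1) s)
        + ∫ s in (0:ℝ)..t, ∑' i : ℕ, x s * k (m+i) * M (m+i) s := by
  intro m hm t ht
  obtain ⟨ht0, htT⟩ := ht
  have htD : t ∈ Set.Ico (0:ℝ) T := ⟨ht0, htT⟩
  have hIcc : Set.Icc (0:ℝ) t ⊆ Set.Ico 0 T := fun s hs => ⟨hs.1, lt_of_le_of_lt hs.2 htT⟩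
  have h0I : (0:ℝ) ∈ Set.Icc (0:ℝ) t := ⟨le_refl 0, ht0⟩
  have h0D : (0:ℝ) ∈ Set.Ico (0:ℝ) T := hIcc h0I
  have hxC : ContinuousOn x (Set.Icc 0 t) := hsol.x_cont.mono hIcc
  have hMC : ∀ i, ContinuousOn (M i) (Set.Icc 0 t) := fun i => (hsol.M_cont i).mono hIcc
  have hxnn : ∀ s ∈ Set.Icc (0:ℝ) t, 0 ≤ x s := fun s hs => hsol.x_nonneg s (hIcc hs)
  have hMnn : ∀ i, ∀ s ∈ Set.Icc (0:ℝ) t, 0 ≤ M i s := fun i s hs => hsol.M_nonneg i s (hIcc hs)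
  obtain ⟨C, hC⟩ := hsol.norm_bdd t hIcc
  have hCx : ∀ s ∈ Set.Icc (0:ℝ) t, x s ≤ C := by
    intro s hs
    refine le_trans ?_ (hC s hs)
    have h1 : 0 ≤ ∑' i : ℕ, ((i:ℝ)+1) * M i s :=
      tsum_nonneg fun i => mul_nonneg (by positivity) (hMnn i s hs)
    linarith
  have hC0 : 0 ≤ C := le_trans (hxnn 0 h0I) (hCx 0 h0I)
  have hIIc : ∀ f : ℝ → ℝ, ContinuousOn f (Set.Icc 0 t) → IntervalIntegrable f volume 0 t :=
    fun f hf => ContinuousOn.intervalIntegrable (by rw [Set.uIcc_of_le ht0]; exact hf)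
  have hGint : MeasureTheory.IntegrableOn
      (fun s => ∑' i : ℕ, ((i:ℝ)*p i + (i:ℝ)*q i + k i) * M i s) (Set.Ioc 0 t) :=
    (hsol.mom_int t htD).1
  have hSmom : ∀ s ∈ Set.Icc (0:ℝ) t,
      Summable (fun i : ℕ => ((i:ℝ)*p i + (i:ℝ)*q i + k i) * M i s) :=
    fun s hs => hsol.summable_mom s (hIcc hs)
  have hmomc : ∀ i : ℕ, 0 ≤ (i:ℝ)*p i + (i:ℝ)*q i + k i := by
    intro i
    have h1 := mul_nonneg (Nat.cast_nonneg (α := ℝ) i) (hp i)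
    have h2 := mul_nonneg (Nat.cast_nonneg (α := ℝ) i) (hq i)
    linarith [hk i]
  have hmom0 : ∀ i : ℕ, ∀ s ∈ Set.Icc (0:ℝ) t, 0 ≤ ((i:ℝ)*p i + (i:ℝ)*q i + k i) * M i s :=
    fun i s hs => mul_nonneg (hmomc i) (hMnn i s hs)
  -- the A family : x s * k i * M i s
  have hA_nn : ∀ i : ℕ, ∀ s ∈ Set.Icc (0:ℝ) t, 0 ≤ x s * k i * M i s :=
    fun i s hs => mul_nonneg (mul_nonneg (hxnn s hs) (hk i)) (hMnn i s hs)
  have hA_le : ∀ i : ℕ, ∀ s ∈ Set.Icc (0:ℝ) t,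
      x s * k i * M i s ≤ C * (((i:ℝ)*p i + (i:ℝ)*q i + k i) * M i s) := by
    intro i s hs
    have hkM : k i * M i s ≤ ((i:ℝ)*p i + (i:ℝ)*q i + k i) * M i s := by
      refine mul_le_mul_of_nonneg_right ?_ (hMnn i s hs)
      have h1 := mul_nonneg (Nat.cast_nonneg (α := ℝ) i) (hp i)
      have h2 := mul_nonneg (Nat.cast_nonneg (α := ℝ) i) (hq i)
      linarith
    calc x s * k i * M i s = x s * (k i * M i s) := by ring
      _ ≤ C * (k i * M i s) :=
        mul_le_mul_of_nonneg_right (hCx s hs) (mul_nonneg (hk i) (hMnn i s hs))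
      _ ≤ C * (((i:ℝ)*p i + (i:ℝ)*q i + k i) * M i s) :=
        mul_le_mul_of_nonneg_left hkM hC0
  have hA_sum : ∀ s ∈ Set.Icc (0:ℝ) t, Summable (fun i : ℕ => x s * k i * M i s) :=
    fun s hs => Summable.of_nonneg_of_le (fun i => hA_nn i s hs) (fun i => hA_le i s hs)
      ((hSmom s hs).mul_left C)
  have hA_cont : ∀ i : ℕ, ContinuousOn (fun s => x s * k i * M i s) (Set.Icc 0 t) :=
    fun i => (hxC.mul continuousOn_const).mul (hMC i)
  have hCG : MeasureTheory.IntegrableOn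
      (fun s => C * ∑' i : ℕ, ((i:ℝ)*p i + (i:ℝ)*q i + k i) * M i s) (Set.Ioc 0 t) :=
    hGint.const_mul C
  have hA_tsum_le : ∀ s ∈ Set.Icc (0:ℝ) t,
      (∑' i : ℕ, x s * k i * M i s) ≤ C * ∑' i : ℕ, ((i:ℝ)*p i + (i:ℝ)*q i + k i) * M i s := by
    intro s hs
    calc (∑' i : ℕ, x s * k i * M i s)
        ≤ ∑' i : ℕ, C * (((i:ℝ)*p i + (i:ℝ)*q i + k i) * M i s) :=
          Summable.tsum_le_tsum (fun i => hA_le i s hs) (hA_sum s hs) ((hSmom s hs).mul_left C)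
      _ = C * ∑' i : ℕ, ((i:ℝ)*p i + (i:ℝ)*q i + k i) * M i s := tsum_mul_left
  have hAsummable : Summable (fun i : ℕ => ∫ s in (0:ℝ)..t, x s * k i * M i s) :=
    (interchange_aux ht0 (fun i s => x s * k i * M i s) _ hA_cont hA_nn hA_sum hA_tsum_le hCG).1
  -- shifted A family
  have hAm_sum : ∀ s ∈ Set.Icc (0:ℝ) t, Summable (fun j : ℕ => x s * k (m+j) * M (m+j) s) :=
    fun s hs => (hA_sum s hs).comp_injective (add_right_injective m)
  have hAm_tsum_le : ∀ s ∈ Set.Icc (0:ℝ) t,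
      (∑' j : ℕ, x s * k (m+j) * M (m+j) s)
        ≤ C * ∑' i : ℕ, ((i:ℝ)*p i + (i:ℝ)*q i + k i) * M i s := by
    intro s hs
    refine le_trans (Summable.tsum_le_tsum_of_inj (fun j => m + j) (add_right_injective m)
      (fun c _ => hA_nn c s hs) (fun j => le_refl _) (hAm_sum s hs) (hA_sum s hs)) ?_
    exact hA_tsum_le s hs
  have hE2 : (∫ s in (0:ℝ)..t, ∑' j : ℕ, x s * k (m+j) * M (m+j) s)
      = ∑' j : ℕ, ∫ s in (0:ℝ)..t, x s * k (m+j) * M (m+j) s :=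
    (interchange_aux ht0 (fun j s => x s * k (m+j) * M (m+j) s) _
      (fun j => hA_cont (m+j)) (fun j => hA_nn (m+j)) hAm_sum hAm_tsum_le hCG).2
  -- the PQ family : (i:ℝ) * (p i + q i) * M i s
  have hPQ_nn : ∀ i : ℕ, ∀ s ∈ Set.Icc (0:ℝ) t, 0 ≤ (i:ℝ) * (p i + q i) * M i s :=
    fun i s hs => mul_nonneg (mul_nonneg (Nat.cast_nonneg _) (add_nonneg (hp i) (hq i)))
      (hMnn i s hs)
  have hPQ_le : ∀ i : ℕ, ∀ s ∈ Set.Icc (0:ℝ) t,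
      (i:ℝ) * (p i + q i) * M i s ≤ ((i:ℝ)*p i + (i:ℝ)*q i + k i) * M i s := by
    intro i s hs
    refine mul_le_mul_of_nonneg_right ?_ (hMnn i s hs)
    have h1 := hk i
    nlinarith [hk i]
  have hPQ_sum : ∀ s ∈ Set.Icc (0:ℝ) t, Summable (fun i : ℕ => (i:ℝ) * (p i + q i) * M i s) :=
    fun s hs => Summable.of_nonneg_of_le (fun i => hPQ_nn i s hs) (fun i => hPQ_le i s hs)
      (hSmom s hs)
  have hPQ_cont : ∀ i : ℕ, ContinuousOn (fun s => (i:ℝ) * (p i + q i) * M i s) (Set.Icc 0 t) :=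
    fun i => continuousOn_const.mul (hMC i)
  have hPQ_tsum_le : ∀ s ∈ Set.Icc (0:ℝ) t,
      (∑' i : ℕ, (i:ℝ) * (p i + q i) * M i s)
        ≤ ∑' i : ℕ, ((i:ℝ)*p i + (i:ℝ)*q i + k i) * M i s :=
    fun s hs => Summable.tsum_le_tsum (fun i => hPQ_le i s hs) (hPQ_sum s hs) (hSmom s hs)
  have hPQsummable : Summable (fun i : ℕ => ∫ s in (0:ℝ)..t, (i:ℝ) * (p i + q i) * M i s) :=
    (interchange_aux ht0 (fun i s => (i:ℝ) * (p i + q i) * M i s) _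
      hPQ_cont hPQ_nn hPQ_sum hPQ_tsum_le hGint).1
  -- shifted PQ family
  have hPQm_sum : ∀ s ∈ Set.Icc (0:ℝ) t,
      Summable (fun j : ℕ => ((m+j : ℕ):ℝ) * (p (m+j) + q (m+j)) * M (m+j) s) :=
    fun s hs => (hPQ_sum s hs).comp_injective (add_right_injective m)
  have hPQm_tsum_le : ∀ s ∈ Set.Icc (0:ℝ) t,
      (∑' j : ℕ, ((m+j : ℕ):ℝ) * (p (m+j) + q (m+j)) * M (m+j) s)
        ≤ ∑' i : ℕ, ((i:ℝ)*p i + (i:ℝ)*q i + k i) * M i s := by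
    intro s hs
    refine le_trans (Summable.tsum_le_tsum_of_inj (fun j => m + j) (add_right_injective m)
      (fun c _ => hPQ_nn c s hs) (fun j => le_refl _) (hPQm_sum s hs) (hPQ_sum s hs)) ?_
    exact hPQ_tsum_le s hs
  have hE1 : (∫ s in (0:ℝ)..t, ∑' j : ℕ, ((m+j : ℕ):ℝ) * (p (m+j) + q (m+j)) * M (m+j) s)
      = ∑' j : ℕ, ∫ s in (0:ℝ)..t, ((m+j : ℕ):ℝ) * (p (m+j) + q (m+j)) * M (m+j) s :=
    (interchange_aux ht0 (fun j s => ((m+j : ℕ):ℝ) * (p (m+j) + q (m+j)) * M (m+j) s) _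
      (fun j => hPQ_cont (m+j)) (fun j => hPQ_nn (m+j)) hPQm_sum hPQm_tsum_le hGint).2
  -- step identity from the equations
  have hstep : ∀ i : ℕ, M (i+1) t - M (i+1) 0
      = (∫ s in (0:ℝ)..t, x s * k i * M i s) - (∫ s in (0:ℝ)..t, x s * k (i+1) * M (i+1) s)
        - (∫ s in (0:ℝ)..t, (p (i+1) + q (i+1)) * M (i+1) s) := by
    intro i
    have h := hsol.eq_M (i+1) (Nat.le_add_left 1 i) t htD
    simp only [Nat.add_sub_cancel] at h
    have hA' : IntervalIntegrable (fun s => k i * x s * M i s) volume 0 t :=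
      hIIc _ ((continuousOn_const.mul hxC).mul (hMC i))
    have hB' : IntervalIntegrable (fun s => k (i+1) * x s * M (i+1) s) volume 0 t :=
      hIIc _ ((continuousOn_const.mul hxC).mul (hMC (i+1)))
    have hC' : IntervalIntegrable (fun s => (p (i+1) + q (i+1)) * M (i+1) s) volume 0 t :=
      hIIc _ (continuousOn_const.mul (hMC (i+1)))
    rw [intervalIntegral.integral_sub (hA'.sub hB') hC', intervalIntegral.integral_sub hA' hB'] at h
    have c1 : (∫ s in (0:ℝ)..t, k i * x s * M i s) = ∫ s in (0:ℝ)..t, x s * k i * M i s :=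
      intervalIntegral.integral_congr (fun s _ => by ring)
    have c2 : (∫ s in (0:ℝ)..t, k (i+1) * x s * M (i+1) s)
        = ∫ s in (0:ℝ)..t, x s * k (i+1) * M (i+1) s :=
      intervalIntegral.integral_congr (fun s _ => by ring)
    rw [h, c1, c2]; ring
  have hpqrel : ∀ i : ℕ, (∫ s in (0:ℝ)..t, (i:ℝ) * (p i + q i) * M i s)
      = (i:ℝ) * ∫ s in (0:ℝ)..t, (p i + q i) * M i s := by
    intro i
    rw [← intervalIntegral.integral_const_mul]
    exact intervalIntegral.integral_congr (fun s _ => by ring)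
  have ha0 : ∀ i : ℕ, 0 ≤ ∫ s in (0:ℝ)..t, x s * k i * M i s :=
    fun i => intervalIntegral.integral_nonneg ht0 (fun s hs => hA_nn i s hs)
  have hpq10 : ∀ i : ℕ, 0 ≤ ∫ s in (0:ℝ)..t, (p i + q i) * M i s :=
    fun i => intervalIntegral.integral_nonneg ht0
      (fun s hs => mul_nonneg (add_nonneg (hp i) (hq i)) (hMnn i s hs))
  have hsMt : Summable (fun i : ℕ => (i:ℝ) * M i t) := by
    refine Summable.of_nonneg_of_le
      (fun i => mul_nonneg (Nat.cast_nonneg _) (hsol.M_nonneg i t htD)) (fun i => ?_)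
      (hsol.summable_norm t htD)
    exact mul_le_mul_of_nonneg_right (by linarith) (hsol.M_nonneg i t htD)
  have hsM0 : Summable (fun i : ℕ => (i:ℝ) * M i 0) := by
    refine Summable.of_nonneg_of_le
      (fun i => mul_nonneg (Nat.cast_nonneg _) (hsol.M_nonneg i 0 h0D)) (fun i => ?_)
      (hsol.summable_norm 0 h0D)
    exact mul_le_mul_of_nonneg_right (by linarith) (hsol.M_nonneg i 0 h0D)
  have key := seq_limit (fun i => ∫ s in (0:ℝ)..t, x s * k i * M i s)
    (fun i => ∫ s in (0:ℝ)..t, (i:ℝ) * (p i + q i) * M i s)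
    (fun i => ∫ s in (0:ℝ)..t, (p i + q i) * M i s)
    (fun i => M i t) (fun i => M i 0) m hm hstep hpqrel ha0 hpq10
    (fun i => hsol.M_nonneg i t htD) (fun i => hsol.M_nonneg i 0 h0D)
    hAsummable hPQsummable hsMt hsM0
  have hE3 : (∫ s in (0:ℝ)..t, (m:ℝ) * x s * k (m-1) * M (m-1) s)
      = (m:ℝ) * ∫ s in (0:ℝ)..t, x s * k (m-1) * M (m-1) s := by
    rw [← intervalIntegral.integral_const_mul]
    exact intervalIntegral.integral_congr (fun s _ => by ring)
  rw [hE1, hE2, hE3]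
  exact key
end
end
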